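/- arXiv:0706.2483 — 3 statements merged into one kernel-verified Lean document; each statement's English description precedes it below -/
import Mathlib

section
/- Let E be a normed space, v_1,...,v_n ∈ E, and define σ(x) = sup { (Σ_i φ(x_i v_i)^2)^{1/2} : φ ∈ E*, ‖φ‖* ≤ 1 } and |||x||| = E_ε ‖Σ_i ε_i x_i v_i‖ (expectation over uniform independent signs). Then there is a universal constant C_2 > 0 (one may take C_2 = √2) such that σ(x) ≤ C_2 · |||x||| for all x ∈ ℝ^n. -/
open Finset

namespace KA

def r (b : Bool) : ℝ := if b then 1 else -1
lemma r_mul_self (b : Bool) : r b * r b = 1 := by cases b <;> simp [r]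
lemma r_not (b : Bool) : r (!b) = - r b := by cases b <;> simp [r]

variable {n : ℕ}

noncomputable def w (S : Finset (Fin n)) (ε : Fin n → Bool) : ℝ := ∏ i ∈ S, r (ε i)

def fl (i : Fin n) (ε : Fin n → Bool) : Fin n → Bool := Function.update ε i (!(ε i))
def ng (ε : Fin n → Bool) : Fin n → Bool := fun i => !(ε i)

lemma fl_invol (i : Fin n) : Function.Involutive (fl i) := by
  intro ε; funext j
  by_cases h : j = i
  · subst h; simp [fl]
  · simp [fl, Function.update_apply, h]

lemma ng_invol : Function.Involutive (ng (n := n)) := by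
  intro ε; funext j; simp [ng]

lemma fl_apply (i : Fin n) (ε : Fin n → Bool) (j : Fin n) :
    fl i ε j = if j = i then !(ε i) else ε j := by
  simp [fl, Function.update_apply]

lemma w_fl (S : Finset (Fin n)) (i : Fin n) (ε : Fin n → Bool) :
    w S (fl i ε) = (if i ∈ S then -1 else 1) * w S ε := by
  by_cases h : i ∈ S
  · rw [if_pos h, w, w, ← Finset.mul_prod_erase S _ h, ← Finset.mul_prod_erase S _ h]
    have h1 : ∏ j ∈ S.erase i, r (fl i ε j) = ∏ j ∈ S.erase i, r (ε j) := by
      apply Finset.prod_congr rfl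
      intro j hj
      rw [fl_apply, if_neg (Finset.ne_of_mem_erase hj)]
    rw [h1, fl_apply, if_pos rfl, r_not]
    ring
  · rw [if_neg h, one_mul, w, w]
    apply Finset.prod_congr rfl
    intro j hj
    rw [fl_apply, if_neg]
    rintro rfl; exact h hj

lemma w_ng (S : Finset (Fin n)) (ε : Fin n → Bool) :
    w S (ng ε) = (-1 : ℝ) ^ S.card * w S ε := by
  rw [w, w, ← Finset.prod_const, ← Finset.prod_mul_distrib]
  apply Finset.prod_congr rfl
  intro j _
  rw [ng, r_not]; ring

lemma dual_orth (ε δ : Fin n → Bool) :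
    ∑ S : Finset (Fin n), w S ε * w S δ = if ε = δ then (2:ℝ)^n else 0 := by
  have h2 : ∑ S : Finset (Fin n), w S ε * w S δ
      = ∏ i : Fin n, (r (ε i) * r (δ i) + 1) := by
    rw [Finset.prod_add]
    simp only [Finset.prod_const_one, mul_one]
    rw [← Finset.powerset_univ]
    apply Finset.sum_congr rfl
    intro S _
    simp only [w]
    exact Finset.prod_mul_distrib.symm
  rw [h2]
  by_cases h : ε = δ
  · subst h
    rw [if_pos rfl]
    have : ∀ i : Fin n, r (ε i) * r (ε i) + 1 = 2 := by
      intro i; rw [r_mul_self]; norm_num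
    rw [Finset.prod_congr rfl (fun i _ => this i), Finset.prod_const]
    simp
  · rw [if_neg h]
    have : ∃ i, ε i ≠ δ i := by
      by_contra hc
      push_neg at hc
      exact h (funext hc)
    obtain ⟨i, hi⟩ := this
    apply Finset.prod_eq_zero (Finset.mem_univ i)
    revert hi
    cases ε i <;> cases δ i <;> simp [r]

lemma parseval (u v : (Fin n → Bool) → ℝ) :
    ∑ S : Finset (Fin n), (∑ ε : Fin n → Bool, u ε * w S ε) * (∑ ε : Fin n → Bool, v ε * w S ε)
      = (2:ℝ)^n * ∑ ε : Fin n → Bool, u ε * v ε := by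
  have h1 : ∀ S : Finset (Fin n),
      (∑ ε : Fin n → Bool, u ε * w S ε) * (∑ ε : Fin n → Bool, v ε * w S ε)
      = ∑ ε : Fin n → Bool, ∑ δ : Fin n → Bool, u ε * v δ * (w S ε * w S δ) := by
    intro S
    rw [Finset.sum_mul_sum]
    apply Finset.sum_congr rfl; intro ε _
    apply Finset.sum_congr rfl; intro δ _
    ring
  rw [Finset.sum_congr rfl (fun S _ => h1 S), Finset.sum_comm]
  have h2 : ∀ ε : Fin n → Bool,
      (∑ S : Finset (Fin n), ∑ δ : Fin n → Bool, u ε * v δ * (w S ε * w S δ))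
      = (2:ℝ)^n * (u ε * v ε) := by
    intro ε
    rw [Finset.sum_comm]
    have h3 : ∀ δ : Fin n → Bool,
        ∑ S : Finset (Fin n), u ε * v δ * (w S ε * w S δ)
        = u ε * v δ * (if ε = δ then (2:ℝ)^n else 0) := by
      intro δ
      rw [← Finset.mul_sum, dual_orth]
    rw [Finset.sum_congr rfl (fun δ _ => h3 δ)]
    simp
    ring
  rw [Finset.sum_congr rfl (fun ε _ => h2 ε), ← Finset.mul_sum]


variable {n : ℕ}

lemma variance (a : Fin n → ℝ) :
    ∑ ε : Fin n → Bool, (∑ i, r (ε i) * a i)^2 = (2:ℝ)^n * ∑ i, a i^2 := by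
  have pair : ∀ i j : Fin n,
      ∑ ε : Fin n → Bool, r (ε i) * r (ε j) = if i = j then (2:ℝ)^n else 0 := by
    intro i j
    have h := dual_orth (n := n)
    by_cases h : i = j
    · subst h
      rw [if_pos rfl]
      rw [Finset.sum_congr rfl (fun ε _ => r_mul_self (ε i))]
      simp [Finset.card_univ]
    · rw [if_neg h]
      have h1 : ∀ ε : Fin n → Bool,
          r (fl j ε i) * r (fl j ε j) = -(r (ε i) * r (ε j)) := by
        intro ε
        rw [fl_apply, fl_apply, if_pos rfl, if_neg h, r_not]
        ring
      have h2 := (fl_invol j).bijective.sum_comp (fun ε => r (ε i) * r (ε j))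
      rw [Finset.sum_congr rfl (fun ε _ => h1 ε)] at h2
      rw [Finset.sum_neg_distrib] at h2
      linarith
  have expand : ∀ ε : Fin n → Bool,
      (∑ i, r (ε i) * a i)^2 = ∑ i, ∑ j, (a i * a j) * (r (ε i) * r (ε j)) := by
    intro ε
    rw [pow_two, Finset.sum_mul_sum]
    apply Finset.sum_congr rfl; intro i _
    apply Finset.sum_congr rfl; intro j _
    ring
  rw [Finset.sum_congr rfl (fun ε _ => expand ε), Finset.sum_comm]
  have h3 : ∀ i : Fin n,
      ∑ ε : Fin n → Bool, ∑ j, (a i * a j) * (r (ε i) * r (ε j))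
      = (2:ℝ)^n * a i ^ 2 := by
    intro i
    rw [Finset.sum_comm]
    have h4 : ∀ j : Fin n,
        ∑ ε : Fin n → Bool, (a i * a j) * (r (ε i) * r (ε j))
        = (a i * a j) * (if i = j then (2:ℝ)^n else 0) := by
      intro j; rw [← Finset.mul_sum, pair]
    rw [Finset.sum_congr rfl (fun j _ => h4 j)]
    simp
    ring
  rw [Finset.sum_congr rfl (fun i _ => h3 i), ← Finset.mul_sum]

lemma S_fl (a : Fin n → ℝ) (i : Fin n) (ε : Fin n → Bool) :
    ∑ j, r (fl i ε j) * a j = (∑ j, r (ε j) * a j) - 2 * (r (ε i) * a i) := by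
  have h : ∀ j : Fin n, r (fl i ε j) * a j
      = r (ε j) * a j + (if j = i then -2 * (r (ε i) * a i) else 0) := by
    intro j
    rw [fl_apply]
    by_cases hj : j = i
    · subst hj; rw [if_pos rfl, if_pos rfl, r_not]; ring
    · rw [if_neg hj, if_neg hj]; ring
  rw [Finset.sum_congr rfl (fun j _ => h j), Finset.sum_add_distrib]
  simp
  ring

lemma lap (a : Fin n → ℝ) (ε : Fin n → Bool) :
    ((n:ℝ) - 2) * |∑ i, r (ε i) * a i| ≤ ∑ i : Fin n, |∑ j, r (fl i ε j) * a j| := by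
  set s := ∑ j, r (ε j) * a j with hs
  have h1 : ∑ i : Fin n, ((∑ j, r (ε j) * a j) - 2 * (r (ε i) * a i)) = ((n:ℝ) - 2) * s := by
    rw [Finset.sum_sub_distrib, Finset.sum_const, ← Finset.mul_sum, ← hs]
    simp [Finset.card_univ]
    ring
  calc ((n:ℝ) - 2) * |s| ≤ |((n:ℝ) - 2) * s| := by
        rw [abs_mul]
        exact mul_le_mul_of_nonneg_right (le_abs_self _) (abs_nonneg _)
    _ = |∑ i : Fin n, ((∑ j, r (ε j) * a j) - 2 * (r (ε i) * a i))| := by rw [h1]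
    _ ≤ ∑ i : Fin n, |(∑ j, r (ε j) * a j) - 2 * (r (ε i) * a i)| := Finset.abs_sum_le_sum_abs _ _
    _ = ∑ i : Fin n, |∑ j, r (fl i ε j) * a j| := by
        apply Finset.sum_congr rfl
        intro i _
        rw [S_fl]

lemma c_odd (a : Fin n → ℝ) (S : Finset (Fin n)) (h : Odd S.card) :
    ∑ ε : Fin n → Bool, |∑ i, r (ε i) * a i| * w S ε = 0 := by
  have heven : ∀ ε : Fin n → Bool, |∑ i, r (ng ε i) * a i| = |∑ i, r (ε i) * a i| := by
    intro ε
    have : ∑ i, r (ng ε i) * a i = -∑ i, r (ε i) * a i := by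
      rw [← Finset.sum_neg_distrib]
      apply Finset.sum_congr rfl
      intro i _
      rw [ng, r_not]; ring
    rw [this, abs_neg]
  have h2 := ng_invol.bijective.sum_comp (fun ε => |∑ i, r (ε i) * a i| * w S ε)
  have h3 : ∀ ε : Fin n → Bool,
      |∑ i, r (ng ε i) * a i| * w S (ng ε) = -(|∑ i, r (ε i) * a i| * w S ε) := by
    intro ε
    rw [heven, w_ng, h.neg_one_pow]
    ring
  rw [Finset.sum_congr rfl (fun ε _ => h3 ε), Finset.sum_neg_distrib] at h2
  linarith


lemma key_l2_l1 (a : Fin n → ℝ) :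
    (2:ℝ)^n * ∑ ε : Fin n → Bool, (∑ i, r (ε i) * a i)^2
      ≤ 2 * (∑ ε : Fin n → Bool, |∑ i, r (ε i) * a i|)^2 := by
  set f : (Fin n → Bool) → ℝ := fun ε => |∑ i, r (ε i) * a i| with hf
  set c : Finset (Fin n) → ℝ := fun S => ∑ ε : Fin n → Bool, f ε * w S ε with hc
  have hfnn : ∀ ε, 0 ≤ f ε := fun ε => abs_nonneg _
  have hfsq : ∀ ε, f ε ^ 2 = (∑ i, r (ε i) * a i)^2 := fun ε => sq_abs _
  -- Parseval for f
  have P1 : ∑ S : Finset (Fin n), (c S)^2 = (2:ℝ)^n * ∑ ε : Fin n → Bool, (f ε)^2 := by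
    have h := parseval f f
    calc ∑ S : Finset (Fin n), (c S)^2
        = ∑ S : Finset (Fin n), (∑ ε : Fin n → Bool, f ε * w S ε) * (∑ ε : Fin n → Bool, f ε * w S ε) := by
          apply Finset.sum_congr rfl; intro S _; rw [pow_two]
      _ = (2:ℝ)^n * ∑ ε : Fin n → Bool, f ε * f ε := h
      _ = (2:ℝ)^n * ∑ ε : Fin n → Bool, (f ε)^2 := by
          congr 1; apply Finset.sum_congr rfl; intro ε _; rw [pow_two]
  -- Fourier coefficients of flipped f
  have hflip : ∀ (i : Fin n) (S : Finset (Fin n)),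
      ∑ ε : Fin n → Bool, f (fl i ε) * w S ε = (if i ∈ S then (-1:ℝ) else 1) * c S := by
    intro i S
    have h := (fl_invol i).bijective.sum_comp (fun ε => f (fl i ε) * w S ε)
    have h2 : ∀ ε : Fin n → Bool,
        f (fl i (fl i ε)) * w S (fl i ε) = (if i ∈ S then (-1:ℝ) else 1) * (f ε * w S ε) := by
      intro ε
      rw [fl_invol i ε, w_fl]
      ring
    rw [Finset.sum_congr rfl (fun ε _ => h2 ε), ← Finset.mul_sum] at h
    exact h.symm
  -- spectral identity for each direction i
  have P2 : ∀ i : Fin n, ∑ S : Finset (Fin n), (if i ∈ S then (-1:ℝ) else 1) * (c S)^2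
      = (2:ℝ)^n * ∑ ε : Fin n → Bool, f ε * f (fl i ε) := by
    intro i
    have h := parseval f (fun ε => f (fl i ε))
    calc ∑ S : Finset (Fin n), (if i ∈ S then (-1:ℝ) else 1) * (c S)^2
        = ∑ S : Finset (Fin n), (∑ ε : Fin n → Bool, f ε * w S ε)
            * (∑ ε : Fin n → Bool, f (fl i ε) * w S ε) := by
          apply Finset.sum_congr rfl; intro S _
          rw [hflip i S, pow_two, hc]
          ring
      _ = (2:ℝ)^n * ∑ ε : Fin n → Bool, f ε * f (fl i ε) := h
  -- summed spectral identity
  have count : ∀ S : Finset (Fin n),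
      ∑ i : Fin n, (if i ∈ S then (-1:ℝ) else 1) = (n:ℝ) - 2 * S.card := by
    intro S
    have h : ∀ i : Fin n, (if i ∈ S then (-1:ℝ) else 1)
        = 1 - 2 * (if i ∈ S then (1:ℝ) else 0) := by
      intro i; by_cases h : i ∈ S <;> simp [h] <;> norm_num
    rw [Finset.sum_congr rfl (fun i _ => h i), Finset.sum_sub_distrib, ← Finset.mul_sum]
    simp [Finset.card_univ]
  have P3 : ∑ S : Finset (Fin n), ((n:ℝ) - 2 * S.card) * (c S)^2
      = (2:ℝ)^n * ∑ ε : Fin n → Bool, f ε * ∑ i : Fin n, f (fl i ε) := by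
    calc ∑ S : Finset (Fin n), ((n:ℝ) - 2 * S.card) * (c S)^2
        = ∑ S : Finset (Fin n), ∑ i : Fin n, (if i ∈ S then (-1:ℝ) else 1) * (c S)^2 := by
          apply Finset.sum_congr rfl; intro S _
          rw [← Finset.sum_mul, count S]
      _ = ∑ i : Fin n, ∑ S : Finset (Fin n), (if i ∈ S then (-1:ℝ) else 1) * (c S)^2 :=
          Finset.sum_comm
      _ = ∑ i : Fin n, (2:ℝ)^n * ∑ ε : Fin n → Bool, f ε * f (fl i ε) := by
          apply Finset.sum_congr rfl; intro i _; exact P2 i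
      _ = (2:ℝ)^n * ∑ i : Fin n, ∑ ε : Fin n → Bool, f ε * f (fl i ε) := by
          rw [Finset.mul_sum]
      _ = (2:ℝ)^n * ∑ ε : Fin n → Bool, ∑ i : Fin n, f ε * f (fl i ε) := by
          rw [Finset.sum_comm]
      _ = (2:ℝ)^n * ∑ ε : Fin n → Bool, f ε * ∑ i : Fin n, f (fl i ε) := by
          congr 1; apply Finset.sum_congr rfl; intro ε _; rw [Finset.mul_sum]
  -- pointwise Laplacian bound, summed
  have P4 : ((n:ℝ) - 2) * ∑ ε : Fin n → Bool, (f ε)^2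
      ≤ ∑ ε : Fin n → Bool, f ε * ∑ i : Fin n, f (fl i ε) := by
    rw [Finset.mul_sum]
    apply Finset.sum_le_sum
    intro ε _
    have h := lap a ε
    calc ((n:ℝ) - 2) * f ε ^ 2 = f ε * (((n:ℝ) - 2) * f ε) := by ring
      _ ≤ f ε * ∑ i : Fin n, f (fl i ε) := by
          apply mul_le_mul_of_nonneg_left _ (hfnn ε)
          exact h
  -- abbreviations
  set A := ∑ S : Finset (Fin n), (c S)^2 with hA
  set B := ∑ S : Finset (Fin n), (S.card : ℝ) * (c S)^2 with hB
  have e1 : ∑ S : Finset (Fin n), ((n:ℝ) - 2 * S.card) * (c S)^2 = (n:ℝ) * A - 2 * B := by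
    rw [hA, hB, Finset.mul_sum, Finset.mul_sum, ← Finset.sum_sub_distrib]
    apply Finset.sum_congr rfl; intro S _; ring
  -- P5 : B ≤ A
  have P5 : B ≤ A := by
    have h1 : ((n:ℝ) - 2) * ((2:ℝ)^n * ∑ ε : Fin n → Bool, (f ε)^2)
        ≤ (n:ℝ) * A - 2 * B := by
      rw [← e1, P3]
      have h2 : (0:ℝ) ≤ (2:ℝ)^n := by positivity
      calc ((n:ℝ) - 2) * ((2:ℝ)^n * ∑ ε : Fin n → Bool, (f ε)^2)
          = (2:ℝ)^n * (((n:ℝ) - 2) * ∑ ε : Fin n → Bool, (f ε)^2) := by ring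
        _ ≤ (2:ℝ)^n * ∑ ε : Fin n → Bool, f ε * ∑ i : Fin n, f (fl i ε) :=
            mul_le_mul_of_nonneg_left P4 h2
    rw [← P1] at h1
    linarith
  -- evenness: B ≥ 2 * (A - c ∅ ^ 2)
  have P6 : A ≤ 2 * (c ∅)^2 := by
    have key : ∀ S : Finset (Fin n),
        2 * (c S)^2 - (if S = ∅ then 2 * (c S)^2 else 0) ≤ (S.card:ℝ) * (c S)^2 := by
      intro S
      by_cases hS : S = ∅
      · subst hS; simp
      · rw [if_neg hS, sub_zero]
        rcases Nat.even_or_odd S.card with he | ho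
        · have hpos : 0 < S.card := Finset.card_pos.mpr (Finset.nonempty_of_ne_empty hS)
          have h2 : 2 ≤ S.card := by
            obtain ⟨k, hk⟩ := he
            omega
          have h2' : (2:ℝ) ≤ (S.card : ℝ) := by exact_mod_cast h2
          nlinarith [sq_nonneg (c S)]
        · have : c S = 0 := c_odd a S ho
          simp [this]
    have hsum := Finset.sum_le_sum (fun S (_ : S ∈ Finset.univ) => key S)
    rw [Finset.sum_sub_distrib] at hsum
    have hite : ∑ S : Finset (Fin n), (if S = ∅ then 2 * (c S)^2 else 0) = 2 * (c ∅)^2 := by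
      rw [Finset.sum_ite_eq' Finset.univ (∅ : Finset (Fin n)) (fun S => 2 * (c S)^2)]
      simp
    rw [hite, ← Finset.mul_sum, ← hA, ← hB] at hsum
    linarith
  -- conclude
  have hc0 : c ∅ = ∑ ε : Fin n → Bool, f ε := by
    rw [hc]
    apply Finset.sum_congr rfl
    intro ε _
    simp [w]
  have hQ : ∑ ε : Fin n → Bool, (f ε)^2 = ∑ ε : Fin n → Bool, (∑ i, r (ε i) * a i)^2 :=
    Finset.sum_congr rfl (fun ε _ => hfsq ε)
  rw [← hQ, ← P1, ← hc0]
  exact P6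


lemma khinchin (a : Fin n → ℝ) :
    Real.sqrt (∑ i, a i ^ 2)
      ≤ Real.sqrt 2 * ((∑ ε : Fin n → Bool, |∑ i, r (ε i) * a i|) / 2 ^ n) := by
  set F := ∑ ε : Fin n → Bool, |∑ i, r (ε i) * a i| with hF
  have hFnn : 0 ≤ F := Finset.sum_nonneg (fun ε _ => abs_nonneg _)
  have h2n : (0:ℝ) < (2:ℝ)^n := by positivity
  have hvar := variance a
  have hkey := key_l2_l1 a
  -- (2^n)^2 * ∑ a² ≤ 2 F²
  have h1 : ((2:ℝ)^n)^2 * ∑ i, a i ^ 2 ≤ 2 * F^2 := by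
    calc ((2:ℝ)^n)^2 * ∑ i, a i ^ 2
        = (2:ℝ)^n * ((2:ℝ)^n * ∑ i, a i ^ 2) := by ring
      _ = (2:ℝ)^n * ∑ ε : Fin n → Bool, (∑ i, r (ε i) * a i)^2 := by rw [hvar]
      _ ≤ 2 * F^2 := hkey
  have h2 : ∑ i, a i ^ 2 ≤ 2 * (F / 2^n)^2 := by
    rw [div_pow, ← mul_div_assoc, le_div_iff₀ (by positivity)]
    calc (∑ i, a i ^ 2) * ((2:ℝ)^n)^2 = ((2:ℝ)^n)^2 * ∑ i, a i ^ 2 := by ring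
      _ ≤ 2 * F^2 := h1
  calc Real.sqrt (∑ i, a i ^ 2) ≤ Real.sqrt (2 * (F / 2^n)^2) := Real.sqrt_le_sqrt h2
    _ = Real.sqrt 2 * (F / 2^n) := by
        rw [Real.sqrt_mul (by norm_num), Real.sqrt_sq (by positivity)]


end KA

/-- `σ(x) ≤ √2 · |||x|||` for all `x ∈ ℝ^n`. -/
theorem sigma_le_sqrt_two_mul_tripleNorm
    {E : Type*} [NormedAddCommGroup E] [NormedSpace ℝ E]
    (n : ℕ) (v : Fin n → E)
    (σ T : (Fin n → ℝ) → ℝ)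
    (hσ : ∀ x, σ x = sSup { s : ℝ | ∃ φ : E →L[ℝ] ℝ, ‖φ‖ ≤ 1 ∧
        s = Real.sqrt (∑ i, (φ (x i • v i)) ^ 2) })
    (hT : ∀ x, T x = (∑ ε : Fin n → Bool,
        ‖∑ i, ((if ε i then (1:ℝ) else -1) * x i) • v i‖) / 2 ^ n) :
    ∀ x, σ x ≤ Real.sqrt 2 * T x := by
  intro x
  have hTnn : 0 ≤ T x := by
    rw [hT x]
    positivity
  rw [hσ x]
  apply Real.sSup_le
  · rintro s ⟨φ, hφ, rfl⟩
    set a : Fin n → ℝ := fun i => φ (x i • v i) with ha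
    calc Real.sqrt (∑ i, (φ (x i • v i)) ^ 2)
        ≤ Real.sqrt 2 * ((∑ ε : Fin n → Bool, |∑ i, KA.r (ε i) * a i|) / 2 ^ n) :=
          KA.khinchin a
      _ ≤ Real.sqrt 2 * T x := by
          apply mul_le_mul_of_nonneg_left _ (Real.sqrt_nonneg 2)
          rw [hT x]
          apply div_le_div_of_nonneg_right ?_ (by positivity)
          apply Finset.sum_le_sum
          intro ε _
          have hsm : ∀ i : Fin n, ((if ε i then (1:ℝ) else -1) * x i) • v i
              = KA.r (ε i) • (x i • v i) := by
            intro i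
            rw [KA.r, smul_smul]
          have h1 : φ (∑ i, ((if ε i then (1:ℝ) else -1) * x i) • v i)
              = ∑ i, KA.r (ε i) * a i := by
            rw [map_sum]
            apply Finset.sum_congr rfl
            intro i _
            rw [hsm i, map_smul, smul_eq_mul]
          calc |∑ i, KA.r (ε i) * a i|
              = ‖φ (∑ i, ((if ε i then (1:ℝ) else -1) * x i) • v i)‖ := by
                rw [h1, Real.norm_eq_abs]
            _ ≤ ‖φ‖ * ‖∑ i, ((if ε i then (1:ℝ) else -1) * x i) • v i‖ :=
                φ.le_opNorm _
            _ ≤ 1 * ‖∑ i, ((if ε i then (1:ℝ) else -1) * x i) • v i‖ :=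
                mul_le_mul_of_nonneg_right hφ (norm_nonneg _)
            _ = ‖∑ i, ((if ε i then (1:ℝ) else -1) * x i) • v i‖ := one_mul _
  · positivity
end

section
/- (Khinchin inequality, L^1, with constant) For any real numbers y_1,...,y_n, if ε_1,...,ε_n are independent uniform random signs, then (Σ_i y_i^2)^{1/2} ≥ E|Σ_i ε_i y_i| ≥ (1/√2)·(Σ_i y_i^2)^{1/2}. -/
namespace KhinchinAux

open Finset

noncomputable def χ (b : Bool) : ℝ := if b then 1 else -1

lemma chi_sq (b : Bool) : χ b * χ b = 1 := by cases b <;> norm_num [χ]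
lemma chi_not (b : Bool) : χ (!b) = - χ b := by cases b <;> norm_num [χ]
lemma abs_chi (b : Bool) : |χ b| = 1 := by cases b <;> norm_num [χ]

variable {n : ℕ}

noncomputable def w (A : Finset (Fin n)) (ε : Fin n → Bool) : ℝ := ∏ i ∈ A, χ (ε i)

def flip (i : Fin n) (ε : Fin n → Bool) : Fin n → Bool := fun j => if j = i then !(ε j) else ε j

lemma flip_invol (i : Fin n) : Function.Involutive (flip i) := by
  intro ε; funext j; by_cases h : j = i <;> simp [flip, h]

def negAll (ε : Fin n → Bool) : Fin n → Bool := fun j => !(ε j)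

lemma negAll_invol : Function.Involutive (negAll (n := n)) := by
  intro ε; funext j; simp [negAll]

lemma sum_flip (i : Fin n) (F : (Fin n → Bool) → ℝ) :
    ∑ ε : Fin n → Bool, F (flip i ε) = ∑ ε : Fin n → Bool, F ε :=
  Fintype.sum_bijective _ (flip_invol i).bijective _ _ (fun _ => rfl)

lemma sum_negAll (F : (Fin n → Bool) → ℝ) :
    ∑ ε : Fin n → Bool, F (negAll ε) = ∑ ε : Fin n → Bool, F ε :=
  Fintype.sum_bijective _ negAll_invol.bijective _ _ (fun _ => rfl)

lemma flip_apply_self (i : Fin n) (ε : Fin n → Bool) : flip i ε i = !(ε i) := by simp [flip]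

lemma flip_apply_ne (i : Fin n) (ε : Fin n → Bool) {j : Fin n} (h : j ≠ i) :
    flip i ε j = ε j := by simp [flip, h]

lemma w_flip (A : Finset (Fin n)) (i : Fin n) (ε : Fin n → Bool) :
    w A (flip i ε) = (if i ∈ A then -1 else 1) * w A ε := by
  by_cases hi : i ∈ A
  · rw [if_pos hi, w, w, ← Finset.mul_prod_erase A _ hi, ← Finset.mul_prod_erase A _ hi]
    have h1 : ∀ j ∈ A.erase i, χ (flip i ε j) = χ (ε j) := fun j hj =>
      by rw [flip_apply_ne i ε (Finset.ne_of_mem_erase hj)]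
    rw [Finset.prod_congr rfl h1, flip_apply_self, chi_not]
    ring
  · rw [if_neg hi, one_mul, w, w]
    exact Finset.prod_congr rfl fun j hj =>
      by rw [flip_apply_ne i ε (fun h => hi (h ▸ hj))]

lemma w_negAll (A : Finset (Fin n)) (ε : Fin n → Bool) :
    w A (negAll ε) = (-1) ^ A.card * w A ε := by
  rw [w, w, ← Finset.prod_const (-1 : ℝ), ← Finset.prod_mul_distrib]
  exact Finset.prod_congr rfl fun j _ => by rw [show negAll ε j = !(ε j) from rfl, chi_not]; ring

lemma kernel (ε ε' : Fin n → Bool) :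
    ∑ A : Finset (Fin n), w A ε * w A ε' = if ε = ε' then (2:ℝ)^n else 0 := by
  have h1 : ∀ A : Finset (Fin n), w A ε * w A ε' = ∏ i ∈ A, (χ (ε i) * χ (ε' i)) := by
    intro A; rw [w, w, Finset.prod_mul_distrib]
  have h2 : ∑ A : Finset (Fin n), w A ε * w A ε'
      = ∏ i : Fin n, (χ (ε i) * χ (ε' i) + 1) := by
    rw [Finset.prod_add]
    rw [Finset.powerset_univ]
    exact (Finset.sum_congr rfl fun A _ => by rw [h1]; simp).symm
  rw [h2]
  by_cases h : ε = ε'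
  · subst h
    rw [if_pos rfl]
    have : ∀ i : Fin n, χ (ε i) * χ (ε i) + 1 = 2 := fun i => by rw [chi_sq]; norm_num
    rw [Finset.prod_congr rfl fun i _ => this i, Finset.prod_const]
    simp
  · rw [if_neg h]
    obtain ⟨j, hj⟩ := Function.ne_iff.mp h
    refine Finset.prod_eq_zero (Finset.mem_univ j) ?_
    cases hb : ε j <;> cases hb' : ε' j <;> simp_all [χ]

lemma parseval (F : (Fin n → Bool) → ℝ) :
    ∑ A : Finset (Fin n), (∑ ε : Fin n → Bool, F ε * w A ε)^2
      = 2^n * ∑ ε : Fin n → Bool, (F ε)^2 := by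
  have expand : ∀ A : Finset (Fin n), (∑ ε : Fin n → Bool, F ε * w A ε)^2
      = ∑ ε : Fin n → Bool, ∑ ε' : Fin n → Bool, (F ε * F ε') * (w A ε * w A ε') := by
    intro A
    rw [sq, Finset.sum_mul_sum]
    exact Finset.sum_congr rfl fun ε _ => Finset.sum_congr rfl fun ε' _ => by ring
  rw [Finset.sum_congr rfl fun A _ => expand A, Finset.sum_comm]
  have h1 : ∀ ε : Fin n → Bool,
      ∑ A : Finset (Fin n), ∑ ε' : Fin n → Bool, (F ε * F ε') * (w A ε * w A ε')
        = (F ε)^2 * 2^n := by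
    intro ε
    rw [Finset.sum_comm]
    have h2 : ∀ ε' : Fin n → Bool,
        ∑ A : Finset (Fin n), (F ε * F ε') * (w A ε * w A ε')
          = if ε = ε' then (F ε * F ε') * (2:ℝ)^n else 0 := by
      intro ε'
      rw [← Finset.mul_sum, kernel]
      by_cases h : ε = ε' <;> simp [h]
    rw [Finset.sum_congr rfl fun ε' _ => h2 ε', Finset.sum_ite_eq]
    simp [sq]
  rw [Finset.sum_congr rfl fun ε _ => h1 ε, ← Finset.sum_mul]
  ring

variable (y : Fin n → ℝ)

noncomputable def S (ε : Fin n → Bool) : ℝ := ∑ i, χ (ε i) * y i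
noncomputable def f (ε : Fin n → Bool) : ℝ := |S y ε|
noncomputable def c (A : Finset (Fin n)) : ℝ := ∑ ε : Fin n → Bool, f y ε * w A ε

lemma S_negAll (ε : Fin n → Bool) : S y (negAll ε) = - S y ε := by
  rw [S, S, ← Finset.sum_neg_distrib]
  exact Finset.sum_congr rfl fun i _ => by
    rw [show negAll ε i = !(ε i) from rfl, chi_not]; ring

lemma f_negAll (ε : Fin n → Bool) : f y (negAll ε) = f y ε := by
  rw [f, f, S_negAll, abs_neg]

lemma S_flip (i : Fin n) (ε : Fin n → Bool) :
    S y (flip i ε) = S y ε - 2 * χ (ε i) * y i := by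
  have h : S y (flip i ε) - S y ε = ∑ j, (χ (flip i ε j) - χ (ε j)) * y j := by
    rw [S, S, ← Finset.sum_sub_distrib]
    exact Finset.sum_congr rfl fun j _ => by ring
  have h2 : ∑ j, (χ (flip i ε j) - χ (ε j)) * y j = - (2 * χ (ε i) * y i) := by
    rw [Finset.sum_eq_single i]
    · rw [flip_apply_self, chi_not]; ring
    · intro j _ hj
      rw [flip_apply_ne i ε hj]; ring
    · intro h; exact absurd (Finset.mem_univ i) h
  rw [h2] at h
  linarith

lemma abs_f_sub_flip (i : Fin n) (ε : Fin n → Bool) :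
    |f y ε - f y (flip i ε)| ≤ 2 * |y i| := by
  have h1 : |f y ε - f y (flip i ε)| ≤ |S y ε - S y (flip i ε)| :=
    abs_abs_sub_abs_le_abs_sub _ _
  have h2 : S y ε - S y (flip i ε) = 2 * χ (ε i) * y i := by
    rw [S_flip]; ring
  rw [h2] at h1
  calc |f y ε - f y (flip i ε)| ≤ |2 * χ (ε i) * y i| := h1
    _ = 2 * |y i| := by rw [abs_mul, abs_mul, abs_chi]; simp [abs_of_nonneg]

lemma c_eq_zero_of_odd (A : Finset (Fin n)) (hA : Odd A.card) : c y A = 0 := by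
  have h := sum_negAll (fun ε => f y ε * w A ε)
  have h2 : ∀ ε : Fin n → Bool, f y (negAll ε) * w A (negAll ε) = - (f y ε * w A ε) := by
    intro ε
    rw [f_negAll, w_negAll, hA.neg_one_pow]
    ring
  rw [Finset.sum_congr rfl fun ε _ => h2 ε, Finset.sum_neg_distrib] at h
  have : c y A = ∑ ε : Fin n → Bool, f y ε * w A ε := rfl
  rw [this]
  linarith

lemma sum_flip_coef (i : Fin n) (A : Finset (Fin n)) :
    ∑ ε : Fin n → Bool, f y (flip i ε) * w A ε = (if i ∈ A then -1 else 1) * c y A := by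
  have h := sum_flip i (fun ε => f y (flip i ε) * w A ε)
  simp only [flip_invol i _] at h
  rw [← h]
  have h2 : ∀ ε : Fin n → Bool, f y ε * w A (flip i ε)
      = (if i ∈ A then -1 else 1) * (f y ε * w A ε) := by
    intro ε; rw [w_flip]; ring
  rw [Finset.sum_congr rfl fun ε _ => h2 ε, ← Finset.mul_sum]
  rfl

lemma deriv_bound (i : Fin n) :
    ∑ A : Finset (Fin n), (if i ∈ A then (c y A)^2 else 0) ≤ 2^n * (2^n * (y i)^2) := by
  have hp := parseval (fun ε => f y ε - f y (flip i ε))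
  have hcoef : ∀ A : Finset (Fin n),
      ∑ ε : Fin n → Bool, (f y ε - f y (flip i ε)) * w A ε
        = if i ∈ A then 2 * c y A else 0 := by
    intro A
    have : ∀ ε : Fin n → Bool, (f y ε - f y (flip i ε)) * w A ε
        = f y ε * w A ε - f y (flip i ε) * w A ε := fun ε => by ring
    rw [Finset.sum_congr rfl fun ε _ => this ε, Finset.sum_sub_distrib, sum_flip_coef]
    by_cases h : i ∈ A
    · simp only [if_pos h]
      have : (∑ ε : Fin n → Bool, f y ε * w A ε) = c y A := rfl
      rw [this]; ring
    · simp only [if_neg h]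
      have : (∑ ε : Fin n → Bool, f y ε * w A ε) = c y A := rfl
      rw [this]; ring
  rw [Finset.sum_congr rfl fun A _ => by rw [hcoef A]] at hp
  have hL : ∑ A : Finset (Fin n), (if i ∈ A then 2 * c y A else 0)^2
      = 4 * ∑ A : Finset (Fin n), (if i ∈ A then (c y A)^2 else 0) := by
    rw [Finset.mul_sum]
    refine Finset.sum_congr rfl fun A _ => ?_
    by_cases h : i ∈ A <;> simp [h] <;> ring
  rw [hL] at hp
  have hR : ∑ ε : Fin n → Bool, (f y ε - f y (flip i ε))^2 ≤ 2^n * (4 * (y i)^2) := by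
    have hcard : (Finset.univ : Finset (Fin n → Bool)).card = 2^n := by
      rw [Finset.card_univ, Fintype.card_fun]
      simp
    calc ∑ ε : Fin n → Bool, (f y ε - f y (flip i ε))^2
        ≤ ∑ _ε : Fin n → Bool, (4 * (y i)^2) := by
          refine Finset.sum_le_sum fun ε _ => ?_
          have h1 := abs_f_sub_flip y i ε
          have h2 : (f y ε - f y (flip i ε))^2 = |f y ε - f y (flip i ε)|^2 := (sq_abs _).symm
          rw [h2]
          have h3 : |f y ε - f y (flip i ε)|^2 ≤ (2 * |y i|)^2 := by
            apply sq_le_sq' _ h1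
            nlinarith [abs_nonneg (f y ε - f y (flip i ε))]
          calc |f y ε - f y (flip i ε)|^2 ≤ (2 * |y i|)^2 := h3
            _ = 4 * (y i)^2 := by rw [mul_pow, sq_abs]; ring
      _ = 2^n * (4 * (y i)^2) := by rw [Finset.sum_const, hcard]; simp [mul_comm]
  nlinarith [pow_pos (by norm_num : (0:ℝ) < 2) n]

lemma sum_sq_S : ∑ ε : Fin n → Bool, (S y ε)^2 = 2^n * ∑ i, (y i)^2 := by
  have expand : ∀ ε : Fin n → Bool, (S y ε)^2
      = ∑ i, ∑ j, (y i * y j) * (χ (ε i) * χ (ε j)) := by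
    intro ε
    rw [S, sq, Finset.sum_mul_sum]
    exact Finset.sum_congr rfl fun i _ => Finset.sum_congr rfl fun j _ => by ring
  rw [Finset.sum_congr rfl fun ε _ => expand ε, Finset.sum_comm]
  have h1 : ∀ i : Fin n,
      ∑ ε : Fin n → Bool, ∑ j, (y i * y j) * (χ (ε i) * χ (ε j))
        = 2^n * (y i)^2 := by
    intro i
    rw [Finset.sum_comm]
    have h2 : ∀ j : Fin n, ∑ ε : Fin n → Bool, (y i * y j) * (χ (ε i) * χ (ε j))
        = if i = j then (2:ℝ)^n * (y i)^2 else 0 := by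
      intro j
      by_cases h : i = j
      · subst h
        rw [if_pos rfl]
        have : ∀ ε : Fin n → Bool, (y i * y i) * (χ (ε i) * χ (ε i)) = (y i)^2 := by
          intro ε; rw [chi_sq]; ring
        rw [Finset.sum_congr rfl fun ε _ => this ε, Finset.sum_const, Finset.card_univ,
          Fintype.card_fun]
        simp [mul_comm]
      · rw [if_neg h]
        have hs := sum_flip i (fun ε => (y i * y j) * (χ (ε i) * χ (ε j)))
        have h3 : ∀ ε : Fin n → Bool,
            (y i * y j) * (χ (flip i ε i) * χ (flip i ε j))
              = - ((y i * y j) * (χ (ε i) * χ (ε j))) := by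
          intro ε
          rw [flip_apply_self, flip_apply_ne i ε (fun hh => h hh.symm), chi_not]
          ring
        rw [Finset.sum_congr rfl fun ε _ => h3 ε, Finset.sum_neg_distrib] at hs
        linarith
    rw [Finset.sum_congr rfl fun j _ => h2 j, Finset.sum_ite_eq]
    simp
  rw [Finset.sum_congr rfl fun i _ => h1 i, ← Finset.mul_sum]

lemma c_empty : c y ∅ = ∑ ε : Fin n → Bool, f y ε := by
  rw [c]
  exact Finset.sum_congr rfl fun ε _ => by rw [w]; simp

lemma key (n : ℕ) (y : Fin n → ℝ) :
    (∑ ε : Fin n → Bool, f y ε)^2 ≤ 2^n * (2^n * ∑ i, (y i)^2) ∧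
    2^n * (2^n * ∑ i, (y i)^2) ≤ 2 * (∑ ε : Fin n → Bool, f y ε)^2 := by
  set Y : ℝ := ∑ i, (y i)^2 with hY
  set T : ℝ := ∑ ε : Fin n → Bool, f y ε with hT
  have hQ : ∑ ε : Fin n → Bool, (f y ε)^2 = 2^n * Y := by
    rw [← sum_sq_S y]
    exact Finset.sum_congr rfl fun ε _ => by rw [f, sq_abs]
  have hpars : ∑ A : Finset (Fin n), (c y A)^2 = 2^n * (2^n * Y) := by
    have := parseval (f y)
    rw [hQ] at this
    exact this
  have hupper : T^2 ≤ 2^n * (2^n * Y) := by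
    rw [← hpars, hT, ← c_empty]
    exact Finset.single_le_sum (f := fun A => (c y A)^2) (fun A _ => sq_nonneg _)
      (Finset.mem_univ ∅)
  refine ⟨hupper, ?_⟩
  -- spectral gap with evenness
  have hcardsum : ∑ A : Finset (Fin n), (A.card : ℝ) * (c y A)^2 ≤ 2^n * (2^n * Y) := by
    have hswap : ∑ A : Finset (Fin n), (A.card : ℝ) * (c y A)^2
        = ∑ i : Fin n, ∑ A : Finset (Fin n), (if i ∈ A then (c y A)^2 else 0) := by
      rw [Finset.sum_comm]
      refine Finset.sum_congr rfl fun A _ => ?_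
      rw [Finset.sum_ite_mem, Finset.univ_inter, Finset.sum_const, nsmul_eq_mul]
    rw [hswap]
    calc ∑ i : Fin n, ∑ A : Finset (Fin n), (if i ∈ A then (c y A)^2 else 0)
        ≤ ∑ i : Fin n, 2^n * (2^n * (y i)^2) :=
          Finset.sum_le_sum fun i _ => deriv_bound y i
      _ = 2^n * (2^n * Y) := by
          rw [hY, Finset.mul_sum, Finset.mul_sum]
  have hgap : ∑ A : Finset (Fin n), (if A = ∅ then 0 else 2 * (c y A)^2)
      ≤ ∑ A : Finset (Fin n), (A.card : ℝ) * (c y A)^2 := by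
    refine Finset.sum_le_sum fun A _ => ?_
    by_cases hA : A = ∅
    · simp [hA]
    · rw [if_neg hA]
      by_cases hc : c y A = 0
      · simp [hc]
      · have hodd : ¬ Odd A.card := fun ho => hc (c_eq_zero_of_odd y A ho)
        have heven : Even A.card := Nat.not_odd_iff_even.mp hodd
        have hne : A.card ≠ 0 := fun h0 => hA (Finset.card_eq_zero.mp h0)
        have h2le : 2 ≤ A.card := by
          rcases heven with ⟨k, hk⟩
          omega
        have : (2:ℝ) ≤ (A.card : ℝ) := by exact_mod_cast h2le
        nlinarith [sq_nonneg (c y A)]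
  have hsplit : ∑ A : Finset (Fin n), (if A = ∅ then 0 else 2 * (c y A)^2)
      = 2 * (2^n * (2^n * Y)) - 2 * T^2 := by
    have h1 : ∀ A : Finset (Fin n), (if A = ∅ then 0 else 2 * (c y A)^2)
        = 2 * (c y A)^2 - (if (∅ : Finset (Fin n)) = A then 2 * (c y A)^2 else 0) := by
      intro A
      by_cases hA : A = ∅
      · subst hA; simp
      · rw [if_neg hA, if_neg (fun h => hA h.symm)]; ring
    rw [Finset.sum_congr rfl fun A _ => h1 A, Finset.sum_sub_distrib, Finset.sum_ite_eq,
      ← Finset.mul_sum, hpars, if_pos (Finset.mem_univ _), c_empty, ← hT]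
  rw [hsplit] at hgap
  have := le_trans hgap hcardsum
  linarith

end KhinchinAux

/-- Khinchin inequality in L¹ with Szarek's constant `1/√2`:
`√(∑ y_i²) ≥ E|∑ ε_i y_i| ≥ (1/√2) √(∑ y_i²)`. -/
theorem khinchin_L1
    (n : ℕ) (y : Fin n → ℝ) :
    (∑ ε : Fin n → Bool, |∑ i, (if ε i then (1:ℝ) else -1) * y i|) / 2 ^ n
        ≤ Real.sqrt (∑ i, y i ^ 2) ∧
    (1 / Real.sqrt 2) * Real.sqrt (∑ i, y i ^ 2)
        ≤ (∑ ε : Fin n → Bool, |∑ i, (if ε i then (1:ℝ) else -1) * y i|) / 2 ^ n := by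
  have hrw : (∑ ε : Fin n → Bool, |∑ i, (if ε i then (1:ℝ) else -1) * y i|)
      = ∑ ε : Fin n → Bool, KhinchinAux.f y ε := rfl
  rw [hrw]
  obtain ⟨hup, hlo⟩ := KhinchinAux.key n y
  set Y : ℝ := ∑ i, y i ^ 2 with hY
  set T : ℝ := ∑ ε : Fin n → Bool, KhinchinAux.f y ε with hT
  have hN : (0:ℝ) < 2^n := pow_pos (by norm_num) n
  have hYnn : 0 ≤ Y := Finset.sum_nonneg fun i _ => sq_nonneg _
  have hTnn : 0 ≤ T := Finset.sum_nonneg fun ε _ => abs_nonneg _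
  have hE2_le : (T / 2^n)^2 ≤ Y := by
    rw [div_pow]
    rw [div_le_iff₀ (by positivity)]
    calc T^2 ≤ 2^n * (2^n * Y) := hup
      _ = Y * (2^n)^2 := by ring
  have hE2_ge : Y / 2 ≤ (T / 2^n)^2 := by
    rw [div_pow, le_div_iff₀ (by positivity), div_mul_eq_mul_div, div_le_iff₀ (by norm_num : (0:ℝ) < 2)]
    calc Y * (2^n)^2 = 2^n * (2^n * Y) := by ring
      _ ≤ 2 * T^2 := hlo
      _ = T^2 * 2 := by ring
  constructor
  · exact (Real.le_sqrt (by positivity) hYnn).mpr hE2_le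
  · have h1 : (1 / Real.sqrt 2) * Real.sqrt Y = Real.sqrt (Y / 2) := by
      rw [Real.sqrt_div hYnn]
      ring
    rw [h1]
    calc Real.sqrt (Y / 2) ≤ Real.sqrt ((T / 2^n)^2) := Real.sqrt_le_sqrt hE2_ge
      _ = T / 2^n := Real.sqrt_sq (by positivity)
end

section
/- (Talagrand's concentration, expectation form) Let (E, ‖·‖) be a normed space, w_1,...,w_n ∈ E, and ε_1,...,ε_n independent uniform random signs. Set σ^2 = sup{ Σ_i φ(w_i)^2 : φ ∈ E*, ‖φ‖* ≤ 1 }. Then there exist universal constants C_1, c_1 > 0 such that for every t > 0, P{ | ‖Σ_i ε_i w_i‖ − E‖Σ_i ε_i w_i‖ | ≥ t } ≤ C_1 exp(−c_1 t^2/σ^2). -/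
open scoped Classical
open Finset

namespace Tal

variable {n : ℕ}

def chi {n : ℕ} (x y : Fin n → Bool) : Fin n → ℝ := fun i => if x i = y i then 0 else 1

def Q {n : ℕ} (ν : Fin n → ℝ) : ℝ := ∑ i, (ν i)^2

def IsWeight {n : ℕ} (A : Finset (Fin n → Bool)) (p : (Fin n → Bool) → ℝ) : Prop :=
  (∀ y, 0 ≤ p y) ∧ (∀ y, y ∉ A → p y = 0) ∧ (∑ y, p y) = 1

def vec {n : ℕ} (x : Fin n → Bool) (p : (Fin n → Bool) → ℝ) : Fin n → ℝ :=
  fun i => ∑ y, p y * chi x y i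

def DS {n : ℕ} (x : Fin n → Bool) (A : Finset (Fin n → Bool)) : Set ℝ :=
  { r | ∃ p, IsWeight A p ∧ r = Q (vec x p) }

noncomputable def D {n : ℕ} (x : Fin n → Bool) (A : Finset (Fin n → Bool)) : ℝ :=
  sInf (DS x A)

lemma Q_nonneg (ν : Fin n → ℝ) : 0 ≤ Q ν := Finset.sum_nonneg fun i _ => sq_nonneg _

lemma chi_nonneg (x y : Fin n → Bool) (i : Fin n) : 0 ≤ chi x y i := by
  unfold chi; split <;> norm_num

lemma chi_le_one (x y : Fin n → Bool) (i : Fin n) : chi x y i ≤ 1 := by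
  unfold chi; split <;> norm_num

lemma DS_nonempty (x : Fin n → Bool) {A : Finset (Fin n → Bool)} (hA : A.Nonempty) :
    (DS x A).Nonempty := by
  obtain ⟨y₀, hy₀⟩ := hA
  refine ⟨_, fun y => if y = y₀ then 1 else 0, ⟨fun y => by positivity, fun y hy => by
    simp only [ite_eq_right_iff]; intro h; exact absurd (h ▸ hy₀) hy, by simp⟩, rfl⟩

lemma DS_bddBelow (x : Fin n → Bool) (A : Finset (Fin n → Bool)) : BddBelow (DS x A) := by
  refine ⟨0, fun r hr => ?_⟩
  obtain ⟨p, _, rfl⟩ := hr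
  exact Q_nonneg _

lemma D_nonneg (x : Fin n → Bool) {A : Finset (Fin n → Bool)} (hA : A.Nonempty) :
    0 ≤ D x A :=
  le_csInf (DS_nonempty x hA) (fun r hr => by obtain ⟨p, _, rfl⟩ := hr; exact Q_nonneg _)

lemma D_le {x : Fin n → Bool} {A : Finset (Fin n → Bool)} {p : (Fin n → Bool) → ℝ}
    (hp : IsWeight A p) : D x A ≤ Q (vec x p) :=
  csInf_le (DS_bddBelow x A) ⟨p, hp, rfl⟩

lemma exists_weight_lt {x : Fin n → Bool} {A : Finset (Fin n → Bool)} (hA : A.Nonempty)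
    {ε : ℝ} (hε : 0 < ε) : ∃ p, IsWeight A p ∧ Q (vec x p) < D x A + ε := by
  obtain ⟨r, hr, hlt⟩ := exists_lt_of_csInf_lt (DS_nonempty x hA)
    (lt_add_of_pos_right (D x A) hε)
  obtain ⟨p, hp, rfl⟩ := hr
  exact ⟨p, hp, hlt⟩

variable {n : ℕ}

def consE (n : ℕ) : Bool × (Fin n → Bool) ≃ (Fin (n+1) → Bool) where
  toFun p := Fin.cons p.1 p.2
  invFun a := (a 0, Fin.tail a)
  left_inv := by rintro ⟨b, y⟩; simp
  right_inv := fun a => Fin.cons_self_tail a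

lemma sum_cube_succ {M : Type*} [AddCommMonoid M] (g : (Fin (n+1) → Bool) → M) :
    ∑ a, g a = ∑ ω : Bool, ∑ y : Fin n → Bool, g (Fin.cons ω y) := by
  rw [← Equiv.sum_comp (consE n) g, Fintype.sum_prod_type]
  rfl

def secw (A : Finset (Fin (n+1) → Bool)) (ω : Bool) : Finset (Fin n → Bool) :=
  (A.filter (fun a => a 0 = ω)).image Fin.tail

def proj (A : Finset (Fin (n+1) → Bool)) : Finset (Fin n → Bool) := A.image Fin.tail

lemma mem_secw {A : Finset (Fin (n+1) → Bool)} {ω : Bool} {y : Fin n → Bool} :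
    y ∈ secw A ω ↔ Fin.cons ω y ∈ A := by
  constructor
  · rintro hy
    obtain ⟨a, ha, rfl⟩ := Finset.mem_image.1 hy
    obtain ⟨haA, ha0⟩ := Finset.mem_filter.1 ha
    rwa [← ha0, Fin.cons_self_tail]
  · intro h
    exact Finset.mem_image.2 ⟨Fin.cons ω y, Finset.mem_filter.2 ⟨h, by simp⟩, by simp⟩

lemma card_secw_add (A : Finset (Fin (n+1) → Bool)) :
    (secw A true).card + (secw A false).card = A.card := by
  have h1 : ∀ ω, (secw A ω).card = (A.filter (fun a => a 0 = ω)).card := by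
    intro ω
    apply Finset.card_image_of_injOn
    intro a ha b hb hab
    have ha0 := (Finset.mem_filter.1 ha).2
    have hb0 := (Finset.mem_filter.1 hb).2
    calc a = Fin.cons (a 0) (Fin.tail a) := (Fin.cons_self_tail a).symm
    _ = Fin.cons (b 0) (Fin.tail b) := by rw [ha0, hb0, hab]
    _ = b := Fin.cons_self_tail b
  conv_rhs => rw [← Finset.card_filter_add_card_filter_not (p := fun a => a 0 = true)]
  have h2 : (A.filter (fun a => a 0 = false)) = A.filter (fun a => ¬ a 0 = true) := by
    apply Finset.filter_congr; intro a _; simp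
  rw [h1, h1, h2]

lemma secw_subset_proj (A : Finset (Fin (n+1) → Bool)) (ω : Bool) :
    secw A ω ⊆ proj A :=
  Finset.image_subset_image (Finset.filter_subset _ _)

lemma proj_nonempty {A : Finset (Fin (n+1) → Bool)} (hA : A.Nonempty) :
    (proj A).Nonempty := hA.image _

-- lifting along a section q
def liftq (q : (Fin n → Bool) → (Fin (n+1) → Bool)) (p : (Fin n → Bool) → ℝ) :
    (Fin (n+1) → Bool) → ℝ :=
  fun a => if a = q (Fin.tail a) then p (Fin.tail a) else 0

variable {q : (Fin n → Bool) → (Fin (n+1) → Bool)} {p : (Fin n → Bool) → ℝ}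
  {A : Finset (Fin (n+1) → Bool)}

lemma cons_eq_q_iff (hq : ∀ y, Fin.tail (q y) = y) (ω' : Bool) (y : Fin n → Bool) :
    Fin.cons ω' y = q y ↔ ω' = q y 0 := by
  constructor
  · intro h; rw [← h]; simp
  · intro h
    conv_rhs => rw [← Fin.cons_self_tail (q y), hq y, ← h]

lemma liftq_sum (hq : ∀ y, Fin.tail (q y) = y) :
    ∑ a, liftq q p a = ∑ y, p y := by
  rw [sum_cube_succ (liftq q p), Finset.sum_comm]
  apply Finset.sum_congr rfl
  intro y _
  simp only [liftq, Fin.tail_cons, cons_eq_q_iff hq]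
  rw [Finset.sum_ite_eq' Finset.univ (q y 0) (fun _ => p y)]
  simp

lemma liftq_isWeight {S : Finset (Fin n → Bool)} (hq : ∀ y, Fin.tail (q y) = y)
    (hw : IsWeight S p) (hmem : ∀ y ∈ S, q y ∈ A) :
    IsWeight A (liftq q p) := by
  obtain ⟨h0, hsupp, hsum⟩ := hw
  refine ⟨fun a => ?_, fun a ha => ?_, by rw [liftq_sum hq, hsum]⟩
  · unfold liftq
    split
    · exact h0 _
    · exact le_refl 0
  · unfold liftq
    split
    · rename_i h
      by_contra hne
      have hy : Fin.tail a ∈ S := by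
        by_contra hy
        exact hne (hsupp _ hy)
      exact ha (h ▸ hmem _ hy)
    · rfl

lemma vec_liftq (hq : ∀ y, Fin.tail (q y) = y) (ω : Bool) (z : Fin n → Bool) :
    vec (Fin.cons ω z) (liftq q p)
      = Fin.cons (∑ y, p y * chi (Fin.cons ω z) (q y) 0) (vec z p) := by
  funext i
  refine Fin.cases ?_ ?_ i
  · show ∑ a, liftq q p a * chi (Fin.cons ω z) a 0 = _
    rw [sum_cube_succ (fun a => liftq q p a * chi (Fin.cons ω z) a 0), Finset.sum_comm]
    rw [Fin.cons_zero]
    apply Finset.sum_congr rfl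
    intro y _
    simp only [liftq, Fin.tail_cons, cons_eq_q_iff hq]
    have hcons : Fin.cons (q y 0) y = q y := (cons_eq_q_iff hq _ _).mpr rfl
    rw [Finset.sum_eq_single (q y 0)]
    · rw [if_pos rfl, hcons]
    · intro b _ hb; rw [if_neg hb, zero_mul]
    · intro h; exact absurd (Finset.mem_univ _) h
  · intro i
    show ∑ a, liftq q p a * chi (Fin.cons ω z) a i.succ = vec z p i
    have hchi : ∀ a : Fin (n+1) → Bool,
        chi (Fin.cons ω z) a i.succ = chi z (Fin.tail a) i := by
      intro a
      unfold chi Fin.tail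
      simp [Fin.cons_succ]
    simp only [hchi]
    rw [sum_cube_succ (fun a => liftq q p a * chi z (Fin.tail a) i), Finset.sum_comm]
    apply Finset.sum_congr rfl
    intro y _
    simp only [liftq, Fin.tail_cons, cons_eq_q_iff hq]
    rw [← Finset.sum_mul, Finset.sum_ite_eq' Finset.univ (q y 0) (fun _ => p y)]
    simp [vec]


def pick (A : Finset (Fin (n+1) → Bool)) (ω : Bool) (y : Fin n → Bool) :
    Fin (n+1) → Bool :=
  if Fin.cons ω y ∈ A then Fin.cons ω y else Fin.cons (!ω) y

lemma tail_pick (A : Finset (Fin (n+1) → Bool)) (ω : Bool) (y : Fin n → Bool) :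
    Fin.tail (pick A ω y) = y := by
  unfold pick; split <;> simp

lemma pick_mem {A : Finset (Fin (n+1) → Bool)} {y : Fin n → Bool}
    (h : y ∈ proj A) (ω : Bool) : pick A ω y ∈ A := by
  unfold pick
  split
  · assumption
  · rename_i hn
    obtain ⟨a, ha, rfl⟩ := Finset.mem_image.1 h
    have hcons : Fin.cons (a 0) (Fin.tail a) = a := Fin.cons_self_tail a
    by_cases h0 : a 0 = ω
    · exact absurd (by rw [← h0, hcons]; exact ha) hn
    · have : a 0 = !ω := Bool.eq_not_of_ne h0
      rwa [← this, hcons]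

lemma isWeight_mix {N : ℕ} {A : Finset (Fin N → Bool)} {p1 p2 : (Fin N → Bool) → ℝ}
    (h1 : IsWeight A p1) (h2 : IsWeight A p2) {l : ℝ} (hl0 : 0 ≤ l) (hl1 : l ≤ 1) :
    IsWeight A (fun y => l * p1 y + (1-l) * p2 y) := by
  refine ⟨fun y => ?_, fun y hy => ?_, ?_⟩
  · have := h1.1 y; have := h2.1 y
    show 0 ≤ l * p1 y + (1-l) * p2 y
    nlinarith
  · show l * p1 y + (1-l) * p2 y = 0
    rw [h1.2.1 y hy, h2.2.1 y hy]; ring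
  · rw [Finset.sum_add_distrib, ← Finset.mul_sum, ← Finset.mul_sum, h1.2.2, h2.2.2]; ring

lemma vec_mix {N : ℕ} (x : Fin N → Bool) (p1 p2 : (Fin N → Bool) → ℝ) (l : ℝ) :
    vec x (fun y => l * p1 y + (1-l) * p2 y)
      = fun i => l * vec x p1 i + (1-l) * vec x p2 i := by
  funext i
  simp only [vec, add_mul, Finset.sum_add_distrib, Finset.mul_sum, mul_assoc]

lemma Q_cons (t : ℝ) (ν : Fin n → ℝ) : Q (Fin.cons t ν) = t^2 + Q ν := by
  unfold Q
  rw [Fin.sum_univ_succ]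
  simp

lemma Q_combo_le {f g : Fin n → ℝ} {l : ℝ} (hl0 : 0 ≤ l) (hl1 : l ≤ 1) :
    Q (fun i => l * f i + (1-l) * g i) ≤ l * Q f + (1-l) * Q g := by
  unfold Q
  rw [Finset.mul_sum, Finset.mul_sum, ← Finset.sum_add_distrib]
  apply Finset.sum_le_sum
  intro i _
  show (l * f i + (1-l) * g i)^2 ≤ l * f i ^2 + (1-l) * g i ^2
  nlinarith [sq_nonneg (f i - g i), mul_nonneg hl0 (sub_nonneg.2 hl1)]

lemma T_mem {A : Finset (Fin (n+1) → Bool)} {p2 : (Fin n → Bool) → ℝ}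
    (hp2 : IsWeight (proj A) p2) (x : Fin (n+1) → Bool) (ω : Bool) :
    0 ≤ (∑ y, p2 y * chi x (pick A ω y) 0) ∧ (∑ y, p2 y * chi x (pick A ω y) 0) ≤ 1 := by
  constructor
  · exact Finset.sum_nonneg fun y _ => mul_nonneg (hp2.1 y) (chi_nonneg _ _ _)
  · calc (∑ y, p2 y * chi x (pick A ω y) 0) ≤ ∑ y, p2 y := by
          apply Finset.sum_le_sum
          intro y _
          calc p2 y * chi x (pick A ω y) 0 ≤ p2 y * 1 :=
                mul_le_mul_of_nonneg_left (chi_le_one _ _ _) (hp2.1 y)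
          _ = p2 y := mul_one _
    _ = 1 := hp2.2.2

lemma step_B {A : Finset (Fin (n+1) → Bool)} (hA : A.Nonempty) (ω : Bool)
    (z : Fin n → Bool) :
    D (Fin.cons ω z) A ≤ 1 + D z (proj A) := by
  apply le_of_forall_pos_le_add
  intro ε hε
  obtain ⟨p2, hp2, hq2⟩ := exists_weight_lt (x := z) (proj_nonempty hA) hε
  have hsec : ∀ y, Fin.tail (pick A ω y) = y := tail_pick A ω
  have hwt : IsWeight A (liftq (pick A ω) p2) :=
    liftq_isWeight hsec hp2 (fun y hy => pick_mem hy ω)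
  calc D (Fin.cons ω z) A ≤ Q (vec (Fin.cons ω z) (liftq (pick A ω) p2)) := D_le hwt
  _ = Q (Fin.cons (∑ y, p2 y * chi (Fin.cons ω z) (pick A ω y) 0) (vec z p2)) := by
        rw [vec_liftq hsec]
  _ = (∑ y, p2 y * chi (Fin.cons ω z) (pick A ω y) 0)^2 + Q (vec z p2) := Q_cons _ _
  _ ≤ 1 + (D z (proj A) + ε) := by
        have hT := T_mem hp2 (Fin.cons ω z) ω
        have : (∑ y, p2 y * chi (Fin.cons ω z) (pick A ω y) 0)^2 ≤ 1 := by nlinarith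
        nlinarith
  _ = 1 + D z (proj A) + ε := by ring

lemma step_main {A : Finset (Fin (n+1) → Bool)} (ω : Bool) (z : Fin n → Bool)
    (hw : (secw A ω).Nonempty) {l : ℝ} (hl0 : 0 ≤ l) (hl1 : l ≤ 1) :
    D (Fin.cons ω z) A
      ≤ (1-l)^2 + (l * D z (secw A ω) + (1-l) * D z (proj A)) := by
  have hA : A.Nonempty := by
    obtain ⟨y, hy⟩ := hw
    exact ⟨_, mem_secw.1 hy⟩
  apply le_of_forall_pos_le_add
  intro ε hε
  obtain ⟨p1, hp1, hq1⟩ := exists_weight_lt (x := z) hw hε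
  obtain ⟨p2, hp2, hq2⟩ := exists_weight_lt (x := z) (proj_nonempty hA) hε
  have hsec1 : ∀ y : Fin n → Bool, Fin.tail (α := fun _ => Bool) (Fin.cons ω y) = y :=
    fun y => Fin.tail_cons (α := fun _ => Bool) ω y
  have hsec2 : ∀ y, Fin.tail (pick A ω y) = y := tail_pick A ω
  have hwt1 : IsWeight A (liftq (fun y => Fin.cons ω y) p1) :=
    liftq_isWeight hsec1 hp1 (fun y hy => mem_secw.1 hy)
  have hwt2 : IsWeight A (liftq (pick A ω) p2) :=
    liftq_isWeight hsec2 hp2 (fun y hy => pick_mem hy ω)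
  set P1 := liftq (fun y : Fin n → Bool => Fin.cons ω y) p1 with hP1
  set P2 := liftq (pick A ω) p2 with hP2
  set T := (∑ y, p2 y * chi (Fin.cons ω z) (pick A ω y) 0) with hT
  have hTb := T_mem hp2 (Fin.cons ω z) ω
  rw [← hT] at hTb
  have hv1 : vec (Fin.cons ω z) P1 = Fin.cons 0 (vec z p1) := by
    rw [hP1, vec_liftq hsec1]
    congr 1
    have : ∀ y : Fin n → Bool, chi (Fin.cons ω z) (Fin.cons ω y) 0 = 0 := by
      intro y; unfold chi; simp
    simp [this]
  have hv2 : vec (Fin.cons ω z) P2 = Fin.cons T (vec z p2) := by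
    rw [hP2, vec_liftq hsec2]
  have hwt : IsWeight A (fun a => l * P1 a + (1-l) * P2 a) := isWeight_mix hwt1 hwt2 hl0 hl1
  have hveq : vec (Fin.cons ω z) (fun a => l * P1 a + (1-l) * P2 a)
      = Fin.cons ((1-l) * T) (fun i => l * vec z p1 i + (1-l) * vec z p2 i) := by
    rw [vec_mix, hv1, hv2]
    funext i
    refine Fin.cases ?_ ?_ i
    · simp
    · intro j; simp
  calc D (Fin.cons ω z) A ≤ Q (vec (Fin.cons ω z) (fun a => l * P1 a + (1-l) * P2 a)) :=
        D_le hwt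
  _ = ((1-l) * T)^2 + Q (fun i => l * vec z p1 i + (1-l) * vec z p2 i) := by
        rw [hveq, Q_cons]
  _ ≤ (1-l)^2 + (l * Q (vec z p1) + (1-l) * Q (vec z p2)) := by
        have h1 : ((1-l) * T)^2 ≤ (1-l)^2 := by
          nlinarith [mul_nonneg (mul_nonneg (sub_nonneg.2 hTb.2)
            (by linarith [hTb.1] : (0:ℝ) ≤ 1 + T)) (sq_nonneg (1-l))]
        have h2 := Q_combo_le (f := vec z p1) (g := vec z p2) hl0 hl1
        linarith
  _ ≤ (1-l)^2 + (l * D z (secw A ω) + (1-l) * D z (proj A)) + ε := by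
        have e1 : l * Q (vec z p1) ≤ l * (D z (secw A ω) + ε) :=
          mul_le_mul_of_nonneg_left (le_of_lt hq1) hl0
        have e2 : (1-l) * Q (vec z p2) ≤ (1-l) * (D z (proj A) + ε) :=
          mul_le_mul_of_nonneg_left (le_of_lt hq2) (by linarith)
        nlinarith

lemma exp_quad_upper {x : ℝ} (h0 : 0 ≤ x) (hx : x ≤ 1/4) :
    Real.exp x ≤ 1 + x + (43/72) * x^2 := by
  have h := Real.exp_bound' h0 (by linarith) (n := 3) (by norm_num)
  have hexp : (∑ m ∈ Finset.range 3, x ^ m / m.factorial) = 1 + x + x^2/2 := by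
    rw [Finset.sum_range_succ, Finset.sum_range_succ, Finset.sum_range_one]
    norm_num [Nat.factorial]
  rw [hexp] at h
  norm_num [Nat.factorial] at h
  have hcube : x^3 ≤ x^2 * (1/4) := by nlinarith
  nlinarith [sq_nonneg x]

lemma exp_neg_quad_upper {s : ℝ} (h0 : 0 ≤ s) (hs : s ≤ 1/4) :
    Real.exp (-s) ≤ 1 - s + (11/18) * s^2 := by
  have h := Real.exp_bound (x := -s) (by rw [abs_le]; constructor <;> linarith) (n := 3)
    (by norm_num)
  have hexp : (∑ m ∈ Finset.range 3, (-s) ^ m / m.factorial) = 1 - s + s^2/2 := by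
    rw [Finset.sum_range_succ, Finset.sum_range_succ, Finset.sum_range_one]
    norm_num [Nat.factorial]
    ring
  rw [hexp] at h
  have habs : |(-s)| = s := by rw [abs_neg, abs_of_nonneg h0]
  rw [habs] at h
  have h2 := (abs_sub_le_iff.1 h).1
  norm_num [Nat.factorial] at h2
  have hcube : s^3 ≤ s^2 * (1/4) := by nlinarith
  nlinarith [sq_nonneg s]

/-- the key scalar inequality with constant 8 -/
lemma scalar_ineq {u : ℝ} (h0 : 0 < u) (h1 : u ≤ 1) :
    ∃ l : ℝ, 0 ≤ l ∧ l ≤ 1 ∧ Real.exp ((1-l)^2/8) * u ^ (-l : ℝ) ≤ 2 - u := by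
  set s : ℝ := -Real.log u with hs
  have hs0 : 0 ≤ s := by
    rw [hs, neg_nonneg]
    exact Real.log_nonpos (le_of_lt h0) h1
  have hu : u = Real.exp (-s) := by rw [hs, neg_neg, Real.exp_log h0]
  have hrpow : ∀ l : ℝ, u ^ (-l : ℝ) = Real.exp (l * s) := by
    intro l
    rw [Real.rpow_def_of_pos h0]
    congr 1
    rw [hs]
    ring
  clear_value s
  by_cases hc : s ≤ 1/4
  · refine ⟨1 - 4*s, by linarith, by linarith, ?_⟩
    rw [hrpow, ← Real.exp_add]
    have hexparg : (1-(1-4*s))^2/8 + (1-4*s)*s = s - 2*s^2 := by ring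
    rw [hexparg]
    have harg0 : 0 ≤ s - 2*s^2 := by nlinarith
    have harg1 : s - 2*s^2 ≤ 1/4 := by nlinarith
    have hl := exp_quad_upper harg0 harg1
    have hr := exp_neg_quad_upper hs0 hc
    have hsq : (s - 2*s^2)^2 ≤ s^2 := by nlinarith
    rw [hu]
    nlinarith [sq_nonneg s]
  · push_neg at hc
    refine ⟨0, le_refl 0, by norm_num, ?_⟩
    rw [hrpow, zero_mul, Real.exp_zero, mul_one]
    have h18 : Real.exp ((1:ℝ)/8) ≤ 8/7 := by
      have hinv : (7:ℝ)/8 ≤ (Real.exp ((1:ℝ)/8))⁻¹ := by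
        rw [← Real.exp_neg]
        have := Real.add_one_le_exp (-(1/8) : ℝ)
        linarith
      have hmul : (Real.exp ((1:ℝ)/8))⁻¹ * Real.exp ((1:ℝ)/8) = 1 :=
        inv_mul_cancel₀ (ne_of_gt (Real.exp_pos _))
      nlinarith [Real.exp_pos ((1:ℝ)/8)]
    have hu45 : u ≤ 4/5 := by
      rw [hu]
      have hmono : Real.exp (-s) ≤ Real.exp (-(1/4)) := by
        apply Real.exp_le_exp.2; linarith
      have h54 : (5:ℝ)/4 ≤ Real.exp ((1:ℝ)/4) := by
        have := Real.add_one_le_exp ((1:ℝ)/4); linarith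
      have h14 : Real.exp (-(1/4) : ℝ) ≤ 4/5 := by
        rw [Real.exp_neg]
        have hmul : (Real.exp ((1:ℝ)/4))⁻¹ * Real.exp ((1:ℝ)/4) = 1 :=
          inv_mul_cancel₀ (ne_of_gt (Real.exp_pos _))
        nlinarith [Real.exp_pos ((1:ℝ)/4), inv_nonneg.2 (Real.exp_pos ((1:ℝ)/4)).le]
      linarith
    have harg : ((1:ℝ)-0)^2/8 = 1/8 := by norm_num
    rw [harg]
    linarith


lemma holder_sum {ι : Type*} [Fintype ι] [Nonempty ι] (g h : ι → ℝ)
    (hg : ∀ i, 0 < g i) (hh : ∀ i, 0 < h i) {l : ℝ} (hl0 : 0 ≤ l) (hl1 : l ≤ 1) :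
    ∑ i, (g i) ^ (l:ℝ) * (h i) ^ (1-l:ℝ)
      ≤ (∑ i, g i) ^ (l:ℝ) * (∑ i, h i) ^ (1-l:ℝ) := by
  set G := ∑ i, g i with hG
  set H := ∑ i, h i with hH
  have hGpos : 0 < G := Finset.sum_pos (fun i _ => hg i) Finset.univ_nonempty
  have hHpos : 0 < H := Finset.sum_pos (fun i _ => hh i) Finset.univ_nonempty
  have key : ∀ i, (g i) ^ (l:ℝ) * (h i) ^ (1-l:ℝ)
      ≤ (l * (g i / G) + (1-l) * (h i / H)) * (G ^ (l:ℝ) * H ^ (1-l:ℝ)) := by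
    intro i
    have hgm := Real.geom_mean_le_arith_mean2_weighted hl0 (by linarith)
      (div_nonneg (hg i).le hGpos.le) (div_nonneg (hh i).le hHpos.le)
      (by ring : l + (1-l) = 1)
    have e1 : (g i / G) ^ (l:ℝ) = (g i) ^ (l:ℝ) / G ^ (l:ℝ) :=
      Real.div_rpow (hg i).le hGpos.le l
    have e2 : (h i / H) ^ (1-l:ℝ) = (h i) ^ (1-l:ℝ) / H ^ (1-l:ℝ) :=
      Real.div_rpow (hh i).le hHpos.le (1-l)
    rw [e1, e2] at hgm
    have hGl : 0 < G ^ (l:ℝ) := Real.rpow_pos_of_pos hGpos _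
    have hHl : 0 < H ^ (1-l:ℝ) := Real.rpow_pos_of_pos hHpos _
    calc (g i) ^ (l:ℝ) * (h i) ^ (1-l:ℝ)
        = ((g i) ^ (l:ℝ) / G ^ (l:ℝ)) * ((h i) ^ (1-l:ℝ) / H ^ (1-l:ℝ))
            * (G ^ (l:ℝ) * H ^ (1-l:ℝ)) := by field_simp
    _ ≤ (l * (g i / G) + (1-l) * (h i / H)) * (G ^ (l:ℝ) * H ^ (1-l:ℝ)) :=
        mul_le_mul_of_nonneg_right hgm (by positivity)
  calc ∑ i, (g i) ^ (l:ℝ) * (h i) ^ (1-l:ℝ)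
      ≤ ∑ i, (l * (g i / G) + (1-l) * (h i / H)) * (G ^ (l:ℝ) * H ^ (1-l:ℝ)) :=
        Finset.sum_le_sum fun i _ => key i
  _ = (∑ i, (l * (g i / G) + (1-l) * (h i / H))) * (G ^ (l:ℝ) * H ^ (1-l:ℝ)) := by
        rw [← Finset.sum_mul]
  _ = 1 * (G ^ (l:ℝ) * H ^ (1-l:ℝ)) := by
        congr 1
        rw [Finset.sum_add_distrib, ← Finset.mul_sum, ← Finset.mul_sum,
          ← Finset.sum_div, ← Finset.sum_div, ← hG, ← hH]
        field_simp
        ring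
  _ = G ^ (l:ℝ) * H ^ (1-l:ℝ) := one_mul _

lemma exp_rpow' (a l : ℝ) : (Real.exp a) ^ (l:ℝ) = Real.exp (l * a) := by
  rw [Real.rpow_def_of_pos (Real.exp_pos a), Real.log_exp]
  ring_nf


end Tal

namespace Tal

lemma rpow_alg {a b F : ℝ} (ha : 0 < a) (hb : 0 < b) (hF : 0 < F) (l : ℝ) :
    (F/a) ^ (l:ℝ) * (F/b) ^ ((1-l):ℝ) = (F/b) * (a/b) ^ ((-l):ℝ) := by
  have h1 : 0 < (F/a) ^ (l:ℝ) := Real.rpow_pos_of_pos (by positivity) _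
  have h2 : 0 < (F/b) ^ ((1-l):ℝ) := Real.rpow_pos_of_pos (by positivity) _
  have h3 : 0 < (F/b) * (a/b) ^ ((-l):ℝ) := by positivity
  rw [← Real.exp_log (mul_pos h1 h2), ← Real.exp_log h3]
  congr 1
  rw [Real.log_mul h1.ne' h2.ne', Real.log_rpow (by positivity), Real.log_rpow (by positivity),
    Real.log_mul (by positivity : ((F/b):ℝ) ≠ 0) (by positivity : ((a/b):ℝ) ^ ((-l):ℝ) ≠ 0),
    Real.log_rpow (by positivity), Real.log_div hF.ne' ha.ne', Real.log_div hF.ne' hb.ne',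
    Real.log_div ha.ne' hb.ne']
  ring

/-- Talagrand's convex distance inequality, multiplicative form. -/
theorem core (n : ℕ) : ∀ A : Finset (Fin n → Bool), A.Nonempty →
    (∑ x, Real.exp (D x A / 8)) * A.card ≤ 4 ^ n := by
  induction n with
  | zero =>
      intro A hA
      have hcard : A.card = 1 := by
        have h1 : A.card ≤ 1 := by
          have := Finset.card_le_univ A
          simpa using this
        have h2 : 1 ≤ A.card := Finset.card_pos.2 hA
        omega
      have hD : ∀ x : Fin 0 → Bool, D x A = 0 := by
        intro x
        refine le_antisymm ?_ (D_nonneg x hA)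
        obtain ⟨r, ⟨p, hp, rfl⟩⟩ := DS_nonempty x hA
        have : Q (vec x p) = 0 := by
          unfold Q
          simp
        calc D x A ≤ Q (vec x p) := D_le hp
        _ = 0 := this
      have hsum : (∑ x : Fin 0 → Bool, Real.exp (D x A / 8)) = 1 := by
        have h1 : ∀ x : Fin 0 → Bool, Real.exp (D x A / 8) = 1 := fun x => by
          rw [hD, zero_div, Real.exp_zero]
        simp only [h1]
        simp
      rw [hsum, hcard]
      norm_num
  | succ n ih =>
      intro A hA
      set B := proj A with hB
      have hBne : B.Nonempty := proj_nonempty hA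
      have hBcard : 0 < (B.card : ℝ) := by exact_mod_cast Finset.card_pos.2 hBne
      have hAcard : 0 < (A.card : ℝ) := by exact_mod_cast Finset.card_pos.2 hA
      have hSB : (∑ z, Real.exp (D z B / 8)) ≤ 4 ^ n / B.card := by
        rw [le_div_iff₀ hBcard]
        exact ih B hBne
      -- per-ω bound
      have hω : ∀ ω : Bool, (∑ z : Fin n → Bool, Real.exp (D (Fin.cons ω z) A / 8))
          ≤ (4 ^ n / B.card) * (2 - (secw A ω).card / B.card) := by
        intro ω
        by_cases hsec : (secw A ω).Nonempty
        · -- main case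
          have hsc : 0 < ((secw A ω).card : ℝ) := by
            exact_mod_cast Finset.card_pos.2 hsec
          have husub : (secw A ω).card ≤ B.card :=
            Finset.card_le_card (secw_subset_proj A ω)
          have hu0 : 0 < ((secw A ω).card : ℝ) / B.card := div_pos hsc hBcard
          have hu1 : ((secw A ω).card : ℝ) / B.card ≤ 1 :=
            (div_le_one hBcard).2 (by exact_mod_cast husub)
          obtain ⟨l, hl0, hl1, hscal⟩ := scalar_ineq hu0 hu1
          have hSA : (∑ z, Real.exp (D z (secw A ω) / 8)) ≤ 4 ^ n / (secw A ω).card := by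
            rw [le_div_iff₀ hsc]
            exact ih (secw A ω) hsec
          -- pointwise bound and Hölder
          have hpw : ∀ z, Real.exp (D (Fin.cons ω z) A / 8)
              ≤ Real.exp ((1-l)^2/8) *
                ((Real.exp (D z (secw A ω) / 8)) ^ (l:ℝ) *
                 (Real.exp (D z B / 8)) ^ (1-l:ℝ)) := by
            intro z
            rw [exp_rpow', exp_rpow', ← Real.exp_add, ← Real.exp_add]
            apply Real.exp_le_exp.2
            have := step_main ω z hsec hl0 hl1
            calc D (Fin.cons ω z) A / 8
                ≤ ((1-l)^2 + (l * D z (secw A ω) + (1-l) * D z B)) / 8 := by linarith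
            _ = (1-l)^2/8 + (l * (D z (secw A ω) / 8) + (1-l) * (D z B / 8)) := by ring
          calc (∑ z : Fin n → Bool, Real.exp (D (Fin.cons ω z) A / 8))
              ≤ ∑ z : Fin n → Bool, Real.exp ((1-l)^2/8) *
                ((Real.exp (D z (secw A ω) / 8)) ^ (l:ℝ) *
                 (Real.exp (D z B / 8)) ^ (1-l:ℝ)) :=
                Finset.sum_le_sum fun z _ => hpw z
          _ = Real.exp ((1-l)^2/8) * ∑ z : Fin n → Bool,
                ((Real.exp (D z (secw A ω) / 8)) ^ (l:ℝ) *
                 (Real.exp (D z B / 8)) ^ (1-l:ℝ)) := by rw [Finset.mul_sum]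
          _ ≤ Real.exp ((1-l)^2/8) *
                ((∑ z, Real.exp (D z (secw A ω) / 8)) ^ (l:ℝ) *
                 (∑ z, Real.exp (D z B / 8)) ^ (1-l:ℝ)) := by
                apply mul_le_mul_of_nonneg_left _ (Real.exp_pos _).le
                exact holder_sum _ _ (fun z => Real.exp_pos _) (fun z => Real.exp_pos _)
                  hl0 hl1
          _ ≤ Real.exp ((1-l)^2/8) *
                ((4 ^ n / (secw A ω).card) ^ (l:ℝ) * (4 ^ n / B.card) ^ (1-l:ℝ)) := by
                apply mul_le_mul_of_nonneg_left _ (Real.exp_pos _).le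
                apply mul_le_mul
                · exact Real.rpow_le_rpow (Finset.sum_nonneg fun z _ => (Real.exp_pos _).le)
                    hSA hl0
                · exact Real.rpow_le_rpow (Finset.sum_nonneg fun z _ => (Real.exp_pos _).le)
                    hSB (by linarith)
                · positivity
                · positivity
          _ = (4 ^ n / B.card) * (Real.exp ((1-l)^2/8) *
                (((secw A ω).card : ℝ) / B.card) ^ (-l:ℝ)) := by
                rw [rpow_alg hsc hBcard (by positivity : (0:ℝ) < 4 ^ n) l]
                ring
          _ ≤ (4 ^ n / B.card) * (2 - (secw A ω).card / B.card) := by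
                apply mul_le_mul_of_nonneg_left hscal (by positivity)
        · -- empty section
          rw [Finset.not_nonempty_iff_eq_empty.1 hsec]
          simp only [Finset.card_empty, Nat.cast_zero, zero_div, sub_zero]
          have hpw : ∀ z, Real.exp (D (Fin.cons ω z) A / 8)
              ≤ Real.exp (1/8 : ℝ) * Real.exp (D z B / 8) := by
            intro z
            rw [← Real.exp_add]
            apply Real.exp_le_exp.2
            have := step_B hA ω z
            linarith
          have h18 : Real.exp ((1:ℝ)/8) ≤ 2 := by
            have hinv : (7:ℝ)/8 ≤ (Real.exp ((1:ℝ)/8))⁻¹ := by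
              rw [← Real.exp_neg]
              have := Real.add_one_le_exp (-(1/8) : ℝ)
              linarith
            have hmul : (Real.exp ((1:ℝ)/8))⁻¹ * Real.exp ((1:ℝ)/8) = 1 :=
              inv_mul_cancel₀ (ne_of_gt (Real.exp_pos _))
            nlinarith [Real.exp_pos ((1:ℝ)/8)]
          calc (∑ z : Fin n → Bool, Real.exp (D (Fin.cons ω z) A / 8))
              ≤ ∑ z : Fin n → Bool, Real.exp (1/8 : ℝ) * Real.exp (D z B / 8) :=
                Finset.sum_le_sum fun z _ => hpw z
          _ = Real.exp (1/8 : ℝ) * ∑ z, Real.exp (D z B / 8) := by rw [Finset.mul_sum]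
          _ ≤ 2 * (4 ^ n / B.card) := by
                apply mul_le_mul h18 hSB (Finset.sum_nonneg fun z _ => (Real.exp_pos _).le)
                  (by norm_num)
          _ = (4 ^ n / B.card) * 2 := by ring
      -- combine over ω
      have hsplit : (∑ x : Fin (n+1) → Bool, Real.exp (D x A / 8))
          = ∑ ω : Bool, ∑ z : Fin n → Bool, Real.exp (D (Fin.cons ω z) A / 8) :=
        sum_cube_succ _
      have hcards : ((secw A true).card : ℝ) + (secw A false).card = A.card := by
        exact_mod_cast congrArg (Nat.cast (R := ℝ)) (card_secw_add A)
      have htotal : (∑ x : Fin (n+1) → Bool, Real.exp (D x A / 8))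
          ≤ (4 ^ n / B.card) * (4 - A.card / B.card) := by
        rw [hsplit]
        have := hω true
        have := hω false
        have : (∑ ω : Bool, ∑ z : Fin n → Bool, Real.exp (D (Fin.cons ω z) A / 8))
            = (∑ z : Fin n → Bool, Real.exp (D (Fin.cons false z) A / 8))
              + ∑ z : Fin n → Bool, Real.exp (D (Fin.cons true z) A / 8) := by
          rw [Fintype.sum_bool]
          ring
        rw [this]
        have hf := hω false
        have ht := hω true
        have expand : (4 ^ n / (B.card:ℝ)) * (2 - (secw A false).card / B.card)
            + (4 ^ n / B.card) * (2 - (secw A true).card / B.card)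
            = (4 ^ n / B.card) * (4 - A.card / B.card) := by
          rw [← hcards]
          ring
        linarith
      -- final algebra : (4^n/b)(4 - a/b) * a ≤ 4^(n+1)
      have hab : (A.card : ℝ) ≤ 2 * B.card := by
        rw [← hcards]
        have h1 : ((secw A true).card : ℝ) ≤ B.card := by
          exact_mod_cast Finset.card_le_card (secw_subset_proj A true)
        have h2 : ((secw A false).card : ℝ) ≤ B.card := by
          exact_mod_cast Finset.card_le_card (secw_subset_proj A false)
        linarith
      have hkey : (4 ^ n / (B.card:ℝ)) * (4 - A.card / B.card) * A.card ≤ 4 ^ (n+1) := by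
        have h4n : (0:ℝ) < 4 ^ n := by positivity
        have expand2 : (4 ^ n / (B.card:ℝ)) * (4 - A.card / B.card) * A.card
            = 4 ^ n * ((A.card / B.card) * (4 - A.card / B.card)) := by
          field_simp
        rw [expand2]
        have hg : ((A.card:ℝ) / B.card) * (4 - A.card / B.card) ≤ 4 := by
          nlinarith [sq_nonneg ((A.card:ℝ) / B.card - 2)]
        calc 4 ^ n * ((A.card / B.card) * (4 - (A.card:ℝ) / B.card)) ≤ 4 ^ n * 4 :=
              mul_le_mul_of_nonneg_left hg h4n.le
        _ = 4 ^ (n+1) := by ring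
      calc (∑ x, Real.exp (D x A / 8)) * A.card
          ≤ (4 ^ n / (B.card:ℝ)) * (4 - A.card / B.card) * A.card := by
            apply mul_le_mul_of_nonneg_right htotal hAcard.le
      _ ≤ 4 ^ (n+1) := hkey

section Application

variable {E : Type} [NormedAddCommGroup E] [NormedSpace ℝ E] {n : ℕ}

/-- sign vector -/
def sg {n : ℕ} (ε : Fin n → Bool) : Fin n → ℝ := fun i => if ε i then 1 else -1

noncomputable def ff (w : Fin n → E) (ε : Fin n → Bool) : ℝ := ‖∑ i, sg ε i • w i‖

variable {w : Fin n → E} {σ2 : ℝ}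

def SS (w : Fin n → E) : Set ℝ :=
  { s : ℝ | ∃ φ : E →L[ℝ] ℝ, ‖φ‖ ≤ 1 ∧ s = ∑ i, (φ (w i)) ^ 2 }

lemma SS_bddAbove (w : Fin n → E) : BddAbove (SS w) := by
  refine ⟨∑ i, ‖w i‖^2, ?_⟩
  rintro s ⟨φ, hφ, rfl⟩
  apply Finset.sum_le_sum
  intro i _
  have h1 : |φ (w i)| ≤ ‖w i‖ := by
    calc |φ (w i)| = ‖φ (w i)‖ := rfl
    _ ≤ ‖φ‖ * ‖w i‖ := φ.le_opNorm _
    _ ≤ 1 * ‖w i‖ := by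
        apply mul_le_mul_of_nonneg_right hφ (norm_nonneg _)
    _ = ‖w i‖ := one_mul _
  calc (φ (w i))^2 = |φ (w i)|^2 := (sq_abs _).symm
  _ ≤ ‖w i‖^2 := by nlinarith [abs_nonneg (φ (w i))]

lemma SS_zero_mem (w : Fin n → E) : (0:ℝ) ∈ SS w :=
  ⟨0, by simp, by simp⟩

lemma sigma2_nonneg (hσ : σ2 = sSup (SS w)) : 0 ≤ σ2 := by
  rw [hσ]
  exact le_csSup (SS_bddAbove w) (SS_zero_mem w)

lemma sum_sq_le_sigma2 (hσ : σ2 = sSup (SS w)) (φ : E →L[ℝ] ℝ) (hφ : ‖φ‖ ≤ 1) :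
    ∑ i, (φ (w i))^2 ≤ σ2 := by
  rw [hσ]
  exact le_csSup (SS_bddAbove w) ⟨φ, hφ, rfl⟩

/-- Lipschitz-type bound via Hahn-Banach and Cauchy-Schwarz -/
lemma lip_bound (hσ : σ2 = sSup (SS w)) (c : Fin n → ℝ) :
    ‖∑ i, c i • w i‖^2 ≤ σ2 * ∑ i, (c i)^2 := by
  set v := ∑ i, c i • w i with hv
  by_cases hv0 : v = 0
  · rw [hv0, norm_zero]
    have h1 := sigma2_nonneg hσ
    have h2 : (0:ℝ) ≤ ∑ i, (c i)^2 := Finset.sum_nonneg fun i _ => sq_nonneg _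
    nlinarith [mul_nonneg h1 h2]
  · obtain ⟨φ, hφ1, hφv⟩ := exists_dual_vector ℝ v (norm_ne_zero_iff.2 hv0)
    have hφv' : φ v = ‖v‖ := by exact_mod_cast hφv
    have hval : ‖v‖ = ∑ i, c i * φ (w i) := by
      rw [← hφv', hv, map_sum]
      apply Finset.sum_congr rfl
      intro i _
      rw [map_smul]
      rfl
    calc ‖v‖^2 = (∑ i, c i * φ (w i))^2 := by rw [hval]
    _ ≤ (∑ i, (c i)^2) * ∑ i, (φ (w i))^2 := Finset.sum_mul_sq_le_sq_mul_sq _ _ _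
    _ ≤ (∑ i, (c i)^2) * σ2 := by
        apply mul_le_mul_of_nonneg_left (sum_sq_le_sigma2 hσ φ (le_of_eq hφ1))
          (Finset.sum_nonneg fun i _ => sq_nonneg _)
    _ = σ2 * ∑ i, (c i)^2 := mul_comm _ _

lemma sgn_diff_abs (x y : Fin n → Bool) (i : Fin n) :
    |sg x i - sg y i| = 2 * chi x y i := by
  unfold sg chi
  by_cases h : x i = y i
  · rw [if_pos h, h]
    simp
  · rw [if_neg h]
    cases hx : x i <;> cases hy : y i <;> simp [hx, hy] at h ⊢ <;> norm_num

/-- convexity + Lipschitz : distance controls deviation above level m -/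
lemma dist_bound (hσ : σ2 = sSup (SS w)) (m : ℝ)
    (hA : (Finset.univ.filter (fun y => ff w y ≤ m)).Nonempty) (x : Fin n → Bool) :
    ff w x ≤ m + 2 * Real.sqrt σ2 *
      Real.sqrt (D x (Finset.univ.filter (fun y => ff w y ≤ m))) := by
  set A := Finset.univ.filter (fun y => ff w y ≤ m) with hAdef
  have hσ0 : 0 ≤ σ2 := sigma2_nonneg hσ
  have hD0 : 0 ≤ D x A := D_nonneg x hA
  apply le_of_forall_pos_le_add
  intro δ hδ
  set ε : ℝ := (δ / (2 * Real.sqrt σ2 + 1))^2 with hεdef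
  have hε : 0 < ε := by
    apply pow_pos
    apply div_pos hδ
    nlinarith [Real.sqrt_nonneg σ2]
  obtain ⟨p, hp, hq⟩ := exists_weight_lt (x := x) hA hε
  set cf : Fin n → ℝ := fun i => ∑ y, p y * sg y i with hcf
  have hsplit : ff w x ≤ ‖∑ i, cf i • w i‖ + ‖∑ i, (sg x i - cf i) • w i‖ := by
    unfold ff
    have : ∑ i, sg x i • w i = (∑ i, cf i • w i) + ∑ i, (sg x i - cf i) • w i := by
      rw [← Finset.sum_add_distrib]
      apply Finset.sum_congr rfl
      intro i _
      rw [← add_smul]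
      ring_nf
    rw [this]
    exact norm_add_le _ _
  have hfirst : ‖∑ i, cf i • w i‖ ≤ m := by
    have hrw : ∑ i, cf i • w i = ∑ y, p y • (∑ i, sg y i • w i) := by
      have hterm : ∀ i, cf i • w i = ∑ y, (p y * sg y i) • w i := by
        intro i
        show (∑ y, p y * sg y i) • w i = _
        rw [Finset.sum_smul]
      rw [Finset.sum_congr rfl (fun i _ => hterm i), Finset.sum_comm]
      apply Finset.sum_congr rfl
      intro y _
      rw [Finset.smul_sum]
      apply Finset.sum_congr rfl
      intro i _
      rw [smul_smul]
    rw [hrw]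
    calc ‖∑ y, p y • (∑ i, sg y i • w i)‖ ≤ ∑ y, ‖p y • (∑ i, sg y i • w i)‖ :=
          norm_sum_le _ _
    _ = ∑ y, p y * ff w y := by
        apply Finset.sum_congr rfl
        intro y _
        rw [norm_smul, Real.norm_eq_abs, abs_of_nonneg (hp.1 y)]
        rfl
    _ ≤ ∑ y, p y * m := by
        apply Finset.sum_le_sum
        intro y _
        by_cases hy : y ∈ A
        · exact mul_le_mul_of_nonneg_left ((Finset.mem_filter.1 hy).2) (hp.1 y)
        · rw [hp.2.1 y hy, zero_mul, zero_mul]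
    _ = m := by rw [← Finset.sum_mul, hp.2.2, one_mul]
  have hsecond : ‖∑ i, (sg x i - cf i) • w i‖ ≤
      2 * Real.sqrt σ2 * Real.sqrt (D x A + ε) := by
    have hcomp : ∀ i, |sg x i - cf i| ≤ 2 * vec x p i := by
      intro i
      have heq : sg x i - cf i = ∑ y, p y * (sg x i - sg y i) := by
        show sg x i - (∑ y, p y * sg y i) = _
        have h1 : ∑ y, p y * (sg x i - sg y i)
            = (∑ y, p y) * sg x i - ∑ y, p y * sg y i := by
          rw [Finset.sum_mul, ← Finset.sum_sub_distrib]
          apply Finset.sum_congr rfl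
          intro y _
          ring
        rw [h1, hp.2.2, one_mul]
      rw [heq]
      calc |∑ y, p y * (sg x i - sg y i)| ≤ ∑ y, |p y * (sg x i - sg y i)| :=
            Finset.abs_sum_le_sum_abs _ _
      _ = ∑ y, p y * (2 * chi x y i) := by
          apply Finset.sum_congr rfl
          intro y _
          rw [abs_mul, abs_of_nonneg (hp.1 y), sgn_diff_abs]
      _ = 2 * vec x p i := by
          unfold vec
          rw [Finset.mul_sum]
          apply Finset.sum_congr rfl
          intro y _
          ring
    have hsq : ∑ i, (sg x i - cf i)^2 ≤ 4 * Q (vec x p) := by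
      unfold Q
      rw [Finset.mul_sum]
      apply Finset.sum_le_sum
      intro i _
      have h1 := hcomp i
      have h2 : 0 ≤ vec x p i :=
        Finset.sum_nonneg fun y _ => mul_nonneg (hp.1 y) (chi_nonneg x y i)
      calc (sg x i - cf i)^2 = |sg x i - cf i|^2 := (sq_abs _).symm
      _ ≤ (2 * vec x p i)^2 := by nlinarith [abs_nonneg (sg x i - cf i)]
      _ = 4 * (vec x p i)^2 := by ring
    have hnorm2 : ‖∑ i, (sg x i - cf i) • w i‖^2 ≤ σ2 * (4 * (D x A + ε)) := by
      calc ‖∑ i, (sg x i - cf i) • w i‖^2 ≤ σ2 * ∑ i, (sg x i - cf i)^2 :=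
            lip_bound hσ _
      _ ≤ σ2 * (4 * Q (vec x p)) := mul_le_mul_of_nonneg_left hsq hσ0
      _ ≤ σ2 * (4 * (D x A + ε)) := by
            apply mul_le_mul_of_nonneg_left _ hσ0
            linarith
    calc ‖∑ i, (sg x i - cf i) • w i‖
        = Real.sqrt (‖∑ i, (sg x i - cf i) • w i‖^2) := (Real.sqrt_sq (norm_nonneg _)).symm
    _ ≤ Real.sqrt (σ2 * (4 * (D x A + ε))) := Real.sqrt_le_sqrt hnorm2
    _ = 2 * Real.sqrt σ2 * Real.sqrt (D x A + ε) := by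
        rw [show σ2 * (4 * (D x A + ε)) = (2:ℝ)^2 * (σ2 * (D x A + ε)) by ring,
          Real.sqrt_mul (by positivity), Real.sqrt_sq (by norm_num),
          Real.sqrt_mul hσ0]
        ring
  have hsqrt_add : Real.sqrt (D x A + ε) ≤ Real.sqrt (D x A) + Real.sqrt ε := by
    calc Real.sqrt (D x A + ε) ≤ Real.sqrt ((Real.sqrt (D x A) + Real.sqrt ε)^2) := by
          apply Real.sqrt_le_sqrt
          nlinarith [Real.sqrt_nonneg (D x A), Real.sqrt_nonneg ε, Real.sq_sqrt hD0,
            Real.sq_sqrt hε.le]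
    _ = Real.sqrt (D x A) + Real.sqrt ε :=
          Real.sqrt_sq (by positivity)
  have hεδ : 2 * Real.sqrt σ2 * Real.sqrt ε ≤ δ := by
    rw [hεdef, Real.sqrt_sq (by positivity)]
    rw [div_eq_mul_inv]
    have h1 : 0 < 2 * Real.sqrt σ2 + 1 := by nlinarith [Real.sqrt_nonneg σ2]
    rw [show 2 * Real.sqrt σ2 * (δ * (2 * Real.sqrt σ2 + 1)⁻¹)
      = δ * ((2 * Real.sqrt σ2) * (2 * Real.sqrt σ2 + 1)⁻¹) by ring]
    have h2 : (2 * Real.sqrt σ2) * (2 * Real.sqrt σ2 + 1)⁻¹ ≤ 1 := by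
      rw [mul_inv_le_iff₀ h1]
      linarith
    nlinarith
  calc ff w x ≤ ‖∑ i, cf i • w i‖ + ‖∑ i, (sg x i - cf i) • w i‖ := hsplit
  _ ≤ m + 2 * Real.sqrt σ2 * Real.sqrt (D x A + ε) := by linarith
  _ ≤ m + 2 * Real.sqrt σ2 * (Real.sqrt (D x A) + Real.sqrt ε) := by
      have h3 : 0 ≤ 2 * Real.sqrt σ2 := by positivity
      nlinarith [mul_le_mul_of_nonneg_left hsqrt_add h3]
  _ ≤ m + 2 * Real.sqrt σ2 * Real.sqrt (D x A) + δ := by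
      have := hεδ
      nlinarith [Real.sqrt_nonneg (D x A), Real.sqrt_nonneg σ2]

lemma card_univ_cube (n : ℕ) : (Finset.univ : Finset (Fin n → Bool)).card = 2^n := by
  rw [Finset.card_univ, Fintype.card_fun]
  simp

lemma tail_mul (hσ : σ2 = sSup (SS w)) (hσpos : 0 < σ2) (m t : ℝ) (ht : 0 < t) :
    ((Finset.univ.filter (fun x => m + t ≤ ff w x)).card : ℝ)
      * ((Finset.univ.filter (fun y => ff w y ≤ m)).card : ℝ)
      * Real.exp (t^2 / (32 * σ2)) ≤ 4 ^ n := by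
  set A := Finset.univ.filter (fun y => ff w y ≤ m) with hAdef
  by_cases hA : A.Nonempty
  · have hDbd : ∀ x ∈ Finset.univ.filter (fun x => m + t ≤ ff w x),
        Real.exp (t^2 / (32 * σ2)) ≤ Real.exp (D x A / 8) := by
      intro x hx
      have hx' := (Finset.mem_filter.1 hx).2
      have hd := dist_bound hσ m hA x
      have h1 : t ≤ 2 * Real.sqrt σ2 * Real.sqrt (D x A) := by
        rw [← hAdef] at hd
        linarith
      have hD0 : 0 ≤ D x A := D_nonneg x hA
      have h2 : t^2 ≤ 4 * σ2 * D x A := by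
        have e1 := Real.sq_sqrt hσpos.le
        have e2 := Real.sq_sqrt hD0
        nlinarith [Real.sqrt_nonneg σ2, Real.sqrt_nonneg (D x A)]
      apply Real.exp_le_exp.2
      rw [div_le_div_iff₀ (by positivity) (by norm_num)]
      nlinarith
    have hsum : ((Finset.univ.filter (fun x => m + t ≤ ff w x)).card : ℝ)
        * Real.exp (t^2 / (32 * σ2)) ≤ ∑ x, Real.exp (D x A / 8) := by
      calc ((Finset.univ.filter (fun x => m + t ≤ ff w x)).card : ℝ)
            * Real.exp (t^2 / (32 * σ2))
          = ∑ _x ∈ Finset.univ.filter (fun x => m + t ≤ ff w x),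
              Real.exp (t^2 / (32 * σ2)) := by rw [Finset.sum_const, nsmul_eq_mul]
      _ ≤ ∑ x ∈ Finset.univ.filter (fun x => m + t ≤ ff w x), Real.exp (D x A / 8) :=
          Finset.sum_le_sum hDbd
      _ ≤ ∑ x, Real.exp (D x A / 8) := by
          apply Finset.sum_le_sum_of_subset_of_nonneg (Finset.filter_subset _ _)
          intro x _ _
          exact (Real.exp_pos _).le
    have hcore := core n A hA
    have hAc : (0:ℝ) ≤ (A.card : ℝ) := Nat.cast_nonneg _
    calc ((Finset.univ.filter (fun x => m + t ≤ ff w x)).card : ℝ) * (A.card : ℝ)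
          * Real.exp (t^2 / (32 * σ2))
        = (((Finset.univ.filter (fun x => m + t ≤ ff w x)).card : ℝ)
            * Real.exp (t^2 / (32 * σ2))) * A.card := by ring
    _ ≤ (∑ x, Real.exp (D x A / 8)) * A.card := mul_le_mul_of_nonneg_right hsum hAc
    _ ≤ 4 ^ n := hcore
  · rw [Finset.not_nonempty_iff_eq_empty.1 hA]
    simp

lemma exists_median (w : Fin n → E) :
    ∃ m : ℝ, 0 ≤ m ∧
      2^n ≤ 2 * (Finset.univ.filter (fun x => ff w x ≤ m)).card ∧
      2^n ≤ 2 * (Finset.univ.filter (fun x => m ≤ ff w x)).card := by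
  have hne : (Finset.univ : Finset (Fin n → Bool)).Nonempty := Finset.univ_nonempty
  set vals : Finset ℝ := Finset.image (ff w) Finset.univ with hvals
  have hvne : vals.Nonempty := hne.image _
  set good : Finset ℝ := vals.filter
    (fun v => 2^n ≤ 2 * (Finset.univ.filter (fun x => ff w x ≤ v)).card) with hgood
  have hgne : good.Nonempty := by
    refine ⟨vals.max' hvne, Finset.mem_filter.2 ⟨vals.max'_mem hvne, ?_⟩⟩
    have hall : Finset.univ.filter (fun x => ff w x ≤ vals.max' hvne) = Finset.univ := by
      apply Finset.filter_true_of_mem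
      intro x _
      exact Finset.le_max' vals _ (Finset.mem_image_of_mem _ (Finset.mem_univ x))
    rw [hall, card_univ_cube]
    omega
  set m := good.min' hgne with hm
  have hmgood := good.min'_mem hgne
  have hmvals : m ∈ vals := (Finset.mem_filter.1 hmgood).1
  have hm0 : 0 ≤ m := by
    obtain ⟨x, _, hx⟩ := Finset.mem_image.1 hmvals
    rw [← hx]
    exact norm_nonneg _
  refine ⟨m, hm0, (Finset.mem_filter.1 hmgood).2, ?_⟩
  have hlt : 2 * (Finset.univ.filter (fun x => ff w x < m)).card ≤ 2^n := by
    by_cases hltne : (Finset.univ.filter (fun x => ff w x < m)).Nonempty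
    · set vals' := Finset.image (ff w) (Finset.univ.filter (fun x => ff w x < m)) with hv'
      have hv'ne : vals'.Nonempty := hltne.image _
      set v := vals'.max' hv'ne with hvdef
      have hvlt : v < m := by
        obtain ⟨x, hx, hfx⟩ := Finset.mem_image.1 (vals'.max'_mem hv'ne)
        rw [hvdef, ← hfx]
        exact (Finset.mem_filter.1 hx).2
      have heqfilter : Finset.univ.filter (fun x => ff w x < m)
          = Finset.univ.filter (fun x => ff w x ≤ v) := by
        ext x
        simp only [Finset.mem_filter, Finset.mem_univ, true_and]
        constructor
        · intro h
          exact Finset.le_max' _ _ (Finset.mem_image_of_mem _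
            (Finset.mem_filter.2 ⟨Finset.mem_univ x, h⟩))
        · intro h
          exact lt_of_le_of_lt h hvlt
      have hvvals : v ∈ vals := by
        obtain ⟨x, hx, hfx⟩ := Finset.mem_image.1 (vals'.max'_mem hv'ne)
        rw [hvals, hvdef, ← hfx]
        exact Finset.mem_image_of_mem _ (Finset.mem_univ x)
      have hvnotgood : v ∉ good := by
        intro hvg
        have := good.min'_le v hvg
        rw [← hm] at this
        linarith
      have hnot : ¬ (2^n ≤ 2 * (Finset.univ.filter (fun x => ff w x ≤ v)).card) := by
        intro hcon
        exact hvnotgood (Finset.mem_filter.2 ⟨hvvals, hcon⟩)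
      rw [heqfilter]
      omega
    · rw [Finset.not_nonempty_iff_eq_empty.1 hltne]
      simp
  have hsplit : (Finset.univ.filter (fun x => m ≤ ff w x)).card
      + (Finset.univ.filter (fun x => ff w x < m)).card = 2^n := by
    have hfe : Finset.univ.filter (fun x : Fin n → Bool => ff w x < m)
        = Finset.univ.filter (fun x => ¬ m ≤ ff w x) :=
      Finset.filter_congr (fun x _ => by simp [not_le])
    rw [hfe, Finset.card_filter_add_card_filter_not, card_univ_cube]
  omega

lemma four_pow_eq (n : ℕ) : (4:ℝ)^n = 2^n * 2^n := by
  rw [show (4:ℝ) = 2 * 2 by norm_num, mul_pow]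

lemma tail_upper (hσ : σ2 = sSup (SS w)) (hσpos : 0 < σ2) {med t : ℝ}
    (hmed : 2^n ≤ 2 * (Finset.univ.filter (fun x => ff w x ≤ med)).card) (ht : 0 < t) :
    ((Finset.univ.filter (fun x => med + t ≤ ff w x)).card : ℝ)
      ≤ 2 * 2^n / Real.exp (t^2 / (32 * σ2)) := by
  have h := tail_mul hσ hσpos med t ht
  have hE : 0 < Real.exp (t^2 / (32 * σ2)) := Real.exp_pos _
  have hc2 : (2:ℝ)^n ≤ 2 * ((Finset.univ.filter (fun x => ff w x ≤ med)).card : ℝ) := by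
    exact_mod_cast hmed
  have hc1 : (0:ℝ) ≤ ((Finset.univ.filter (fun x => med + t ≤ ff w x)).card : ℝ) :=
    Nat.cast_nonneg _
  rw [le_div_iff₀ hE]
  nlinarith [four_pow_eq n, mul_le_mul_of_nonneg_left hc2 (mul_nonneg hc1 hE.le),
    pow_pos (show (0:ℝ) < 2 by norm_num) n]

lemma tail_lower (hσ : σ2 = sSup (SS w)) (hσpos : 0 < σ2) {med t : ℝ}
    (hmed : 2^n ≤ 2 * (Finset.univ.filter (fun x => med ≤ ff w x)).card) (ht : 0 < t) :
    ((Finset.univ.filter (fun x => ff w x ≤ med - t)).card : ℝ)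
      ≤ 2 * 2^n / Real.exp (t^2 / (32 * σ2)) := by
  have h := tail_mul hσ hσpos (med - t) t ht
  have hfe : Finset.univ.filter (fun x => med - t + t ≤ ff w x)
      = Finset.univ.filter (fun x => med ≤ ff w x) :=
    Finset.filter_congr (fun x _ => by constructor <;> intro <;> linarith)
  rw [hfe] at h
  have hE : 0 < Real.exp (t^2 / (32 * σ2)) := Real.exp_pos _
  have hc2 : (2:ℝ)^n ≤ 2 * ((Finset.univ.filter (fun x => med ≤ ff w x)).card : ℝ) := by
    exact_mod_cast hmed
  have hc1 : (0:ℝ) ≤ ((Finset.univ.filter (fun x => ff w x ≤ med - t)).card : ℝ) :=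
    Nat.cast_nonneg _
  rw [le_div_iff₀ hE]
  nlinarith [four_pow_eq n, mul_le_mul_of_nonneg_left hc2 (mul_nonneg hc1 hE.le),
    pow_pos (show (0:ℝ) < 2 by norm_num) n]

lemma le_exp_sq {r : ℝ} (hr : 0 ≤ r) : r ≤ Real.exp (r^2) := by
  have h1 := Real.add_one_le_exp (r^2)
  nlinarith [sq_nonneg (r - 1)]

/-- pointwise upper-deviation bound : f x - med ≤ c · exp(D/8) -/
lemma pointwise_upper (hσ : σ2 = sSup (SS w)) (hσpos : 0 < σ2) {med : ℝ}
    (hA : (Finset.univ.filter (fun y => ff w y ≤ med)).Nonempty) (x : Fin n → Bool) :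
    ff w x - med ≤ Real.sqrt (32 * σ2) *
      Real.exp (D x (Finset.univ.filter (fun y => ff w y ≤ med)) / 8) := by
  set A := Finset.univ.filter (fun y => ff w y ≤ med) with hAdef
  set c := Real.sqrt (32 * σ2) with hc
  have hcpos : 0 < c := Real.sqrt_pos.2 (by positivity)
  have hc2 : c^2 = 32 * σ2 := Real.sq_sqrt (by positivity)
  have hD0 : 0 ≤ D x A := D_nonneg x hA
  by_cases hcase : ff w x ≤ med
  · have : 0 < c * Real.exp (D x A / 8) := by positivity
    linarith
  · push_neg at hcase
    set s := ff w x - med with hs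
    have hspos : 0 < s := by rw [hs]; linarith
    have hd := dist_bound hσ med hA x
    rw [← hAdef] at hd
    have h1 : s ≤ 2 * Real.sqrt σ2 * Real.sqrt (D x A) := by rw [hs]; linarith
    have h2 : s^2 ≤ 4 * σ2 * D x A := by
      have e1 := Real.sq_sqrt hσpos.le
      have e2 := Real.sq_sqrt hD0
      nlinarith [Real.sqrt_nonneg σ2, Real.sqrt_nonneg (D x A)]
    have h3 : (s/c)^2 ≤ D x A / 8 := by
      rw [div_pow, hc2]
      rw [div_le_div_iff₀ (by positivity) (by norm_num)]
      nlinarith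
    have h4 : s/c ≤ Real.exp (D x A / 8) := by
      calc s/c ≤ Real.exp ((s/c)^2) := le_exp_sq (by positivity)
      _ ≤ Real.exp (D x A / 8) := Real.exp_le_exp.2 h3
    calc s = c * (s/c) := by field_simp
    _ ≤ c * Real.exp (D x A / 8) := mul_le_mul_of_nonneg_left h4 hcpos.le

lemma sum_exp_D_le (hσ : σ2 = sSup (SS w)) {med : ℝ}
    (hmed : 2^n ≤ 2 * (Finset.univ.filter (fun x => ff w x ≤ med)).card) :
    (∑ x, Real.exp (D x (Finset.univ.filter (fun y => ff w y ≤ med)) / 8))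
      ≤ 2 * 2^n := by
  set A := Finset.univ.filter (fun y => ff w y ≤ med) with hAdef
  have h2n : 0 < 2^n := pow_pos (by norm_num) n
  have hApos : 0 < A.card := by omega
  have hA : A.Nonempty := Finset.card_pos.1 hApos
  have hcore := core n A hA
  have hAcr : (0:ℝ) < (A.card:ℝ) := by exact_mod_cast hApos
  have hc2 : (2:ℝ)^n ≤ 2 * ((A.card : ℝ)) := by exact_mod_cast hmed
  have hS0 : 0 ≤ ∑ x, Real.exp (D x A / 8) :=
    Finset.sum_nonneg fun x _ => (Real.exp_pos _).le
  nlinarith [four_pow_eq n, pow_pos (show (0:ℝ) < 2 by norm_num) n]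

/-- upper side : ∑ (f - med) ≤ 2 c 2^n -/
lemma upper_expect (hσ : σ2 = sSup (SS w)) (hσpos : 0 < σ2) {med : ℝ}
    (hmed : 2^n ≤ 2 * (Finset.univ.filter (fun x => ff w x ≤ med)).card) :
    (∑ x, (ff w x - med)) ≤ 2 * Real.sqrt (32 * σ2) * 2^n := by
  set A := Finset.univ.filter (fun y => ff w y ≤ med) with hAdef
  have h2n : 0 < 2^n := pow_pos (by norm_num) n
  have hApos : 0 < A.card := by omega
  have hA : A.Nonempty := Finset.card_pos.1 hApos
  set c := Real.sqrt (32 * σ2) with hc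
  have hcpos : 0 < c := Real.sqrt_pos.2 (by positivity)
  calc (∑ x, (ff w x - med)) ≤ ∑ x, c * Real.exp (D x A / 8) :=
        Finset.sum_le_sum fun x _ => pointwise_upper hσ hσpos hA x
  _ = c * ∑ x, Real.exp (D x A / 8) := by rw [Finset.mul_sum]
  _ ≤ c * (2 * 2^n) := mul_le_mul_of_nonneg_left (sum_exp_D_le hσ hmed) hcpos.le
  _ = 2 * c * 2^n := by ring

lemma geom_bound (M : ℕ) : ∑ k ∈ Finset.range M, (Real.exp (-1) : ℝ)^k ≤ 2 := by
  have he : (2:ℝ) ≤ Real.exp 1 := by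
    have := Real.add_one_le_exp (1:ℝ)
    linarith
  have hr0 : 0 ≤ Real.exp (-1) := (Real.exp_pos _).le
  have hrh : Real.exp (-1) ≤ 1/2 := by
    rw [Real.exp_neg]
    have hmul : (Real.exp 1)⁻¹ * Real.exp 1 = 1 := inv_mul_cancel₀ (ne_of_gt (Real.exp_pos _))
    nlinarith [inv_nonneg.2 (Real.exp_pos 1).le]
  have hne : (Real.exp (-1) : ℝ) ≠ 1 := ne_of_lt (by linarith)
  rw [geom_sum_eq hne]
  have hpow0 : 0 ≤ (Real.exp (-1))^M := pow_nonneg hr0 M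
  have hpow1 : (Real.exp (-1))^M ≤ 1 := pow_le_one₀ hr0 (by linarith)
  rw [div_le_iff_of_neg (by linarith : Real.exp (-1) - 1 < 0)]
  nlinarith

lemma lower_expect (hσ : σ2 = sSup (SS w)) (hσpos : 0 < σ2) {med : ℝ} (hmed0 : 0 ≤ med)
    (hmed : 2^n ≤ 2 * (Finset.univ.filter (fun x => med ≤ ff w x)).card) :
    (∑ x, (med - ff w x)) ≤ 5 * Real.sqrt (32 * σ2) * 2^n := by
  set c := Real.sqrt (32 * σ2) with hc
  have hcpos : 0 < c := Real.sqrt_pos.2 (by positivity)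
  have hc2 : c^2 = 32 * σ2 := Real.sq_sqrt (by positivity)
  set N := Nat.floor (med/c) + 1 with hN
  have hlayer : ∀ x : Fin n → Bool, med - ff w x
      ≤ c * (((Finset.range N).filter (fun k : ℕ => ff w x ≤ med - (k:ℝ)*c)).card : ℝ) := by
    intro x
    by_cases hr : med - ff w x ≤ 0
    · calc med - ff w x ≤ 0 := hr
      _ ≤ _ := by positivity
    · push_neg at hr
      set r := med - ff w x with hrdef
      set K := Nat.floor (r/c) with hK
      have hrc0 : 0 ≤ r / c := le_of_lt (div_pos hr hcpos)
      have hrmed : r ≤ med := by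
        have := norm_nonneg (∑ i, sg x i • w i)
        rw [hrdef]
        unfold ff
        linarith
      have hKN : K + 1 ≤ N := by
        rw [hN, hK]
        have : Nat.floor (r/c) ≤ Nat.floor (med/c) :=
          Nat.floor_le_floor (by gcongr)
        omega
      have hsub : Finset.range (K+1)
          ⊆ (Finset.range N).filter (fun k : ℕ => ff w x ≤ med - (k:ℝ)*c) := by
        intro k hk
        rw [Finset.mem_range] at hk
        refine Finset.mem_filter.2 ⟨Finset.mem_range.2 (by omega), ?_⟩
        have h1 : (k:ℝ) ≤ r/c := by
          calc (k:ℝ) ≤ (K:ℝ) := by exact_mod_cast Nat.lt_succ_iff.1 hk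
          _ ≤ r/c := Nat.floor_le hrc0
        have h2 : (k:ℝ) * c ≤ r := by
          rw [← le_div_iff₀ hcpos]
          exact h1
        rw [hrdef] at h2
        linarith
      have hcard : ((K:ℝ)+1)
          ≤ (((Finset.range N).filter (fun k : ℕ => ff w x ≤ med - (k:ℝ)*c)).card : ℝ) := by
        have hn1 : K + 1 ≤ ((Finset.range N).filter (fun k : ℕ => ff w x ≤ med - (k:ℝ)*c)).card := by
          rw [← Finset.card_range (K+1)]
          exact Finset.card_le_card hsub
        calc ((K:ℝ)+1) = ((K+1 : ℕ) : ℝ) := by push_cast; ring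
        _ ≤ _ := Nat.cast_le.2 hn1
      have hrK : r < c * ((K:ℝ)+1) := by
        have hfl := Nat.lt_floor_add_one (r/c)
        rw [← hK] at hfl
        calc r = c * (r/c) := by field_simp
        _ < c * ((K:ℝ)+1) := by
            apply mul_lt_mul_of_pos_left _ hcpos
            exact_mod_cast hfl
      calc med - ff w x = r := hrdef
      _ ≤ c * ((K:ℝ)+1) := le_of_lt hrK
      _ ≤ c * _ := mul_le_mul_of_nonneg_left hcard hcpos.le
  have hcastcard : ∀ (x : Fin n → Bool),
      (((Finset.range N).filter (fun k : ℕ => ff w x ≤ med - (k:ℝ)*c)).card : ℝ)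
        = ∑ k ∈ Finset.range N, if ff w x ≤ med - (k:ℝ)*c then (1:ℝ) else 0 := by
    intro x
    rw [Finset.card_filter, Nat.cast_sum]
    apply Finset.sum_congr rfl
    intro a _
    split <;> simp
  have hcastcard2 : ∀ k : ℕ,
      ((Finset.univ.filter (fun x : Fin n → Bool => ff w x ≤ med - (k:ℝ)*c)).card : ℝ)
        = ∑ x : Fin n → Bool, if ff w x ≤ med - (k:ℝ)*c then (1:ℝ) else 0 := by
    intro k
    rw [Finset.card_filter, Nat.cast_sum]
    apply Finset.sum_congr rfl
    intro a _
    split <;> simp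
  have hswap : (∑ x : Fin n → Bool,
        (((Finset.range N).filter (fun k : ℕ => ff w x ≤ med - (k:ℝ)*c)).card : ℝ))
      = ∑ k ∈ Finset.range N,
        ((Finset.univ.filter (fun x : Fin n → Bool => ff w x ≤ med - (k:ℝ)*c)).card : ℝ) := by
    simp_rw [hcastcard, hcastcard2]
    rw [Finset.sum_comm]
  have hgk : ∀ k : ℕ,
      ((Finset.univ.filter (fun x : Fin n → Bool => ff w x ≤ med - ((k:ℝ)+1)*c)).card : ℝ)
        ≤ 2 * 2^n * (Real.exp (-1))^(k+1) := by
    intro k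
    have ht : 0 < ((k:ℝ)+1) * c := by positivity
    have htail := tail_lower hσ hσpos hmed ht
    refine le_trans htail ?_
    have harg : (((k:ℝ)+1)*c)^2 / (32*σ2) = ((k:ℝ)+1)^2 := by
      rw [mul_pow, hc2]
      field_simp
    rw [harg]
    rw [div_le_iff₀ (Real.exp_pos _)]
    have hpow : (Real.exp (-1))^(k+1) = Real.exp (-((k:ℝ)+1)) := by
      rw [← Real.exp_nat_mul]
      congr 1
      push_cast
      ring
    rw [hpow, mul_assoc, ← Real.exp_add]
    have hexp1 : 1 ≤ Real.exp (-((k:ℝ)+1) + ((k:ℝ)+1)^2) := by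
      apply Real.one_le_exp
      nlinarith [Nat.cast_nonneg (α := ℝ) k]
    nlinarith [pow_pos (show (0:ℝ) < 2 by norm_num) n]
  have hN1 : N = (N-1) + 1 := by omega
  set M := N - 1 with hM
  have hbound : ∑ k ∈ Finset.range N,
      ((Finset.univ.filter (fun x : Fin n → Bool => ff w x ≤ med - (k:ℝ)*c)).card : ℝ)
      ≤ 5 * 2^n := by
    rw [hN1]
    rw [Finset.sum_range_succ']
    have hg0 : ((Finset.univ.filter
        (fun x : Fin n → Bool => ff w x ≤ med - ((0:ℕ):ℝ)*c)).card : ℝ) ≤ 2^n := by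
      have h1 := Finset.card_filter_le (Finset.univ : Finset (Fin n → Bool))
        (fun x => ff w x ≤ med - ((0:ℕ):ℝ)*c)
      have h2 : ((Finset.univ : Finset (Fin n → Bool)).card : ℝ) = 2^n := by
        rw [card_univ_cube]
        push_cast
        ring
      calc ((Finset.univ.filter
          (fun x : Fin n → Bool => ff w x ≤ med - ((0:ℕ):ℝ)*c)).card : ℝ)
          ≤ ((Finset.univ : Finset (Fin n → Bool)).card : ℝ) := by exact_mod_cast h1
      _ = 2^n := h2
    have hsum2 : ∑ k ∈ Finset.range M,
        ((Finset.univ.filter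
          (fun x : Fin n → Bool => ff w x ≤ med - ((k:ℕ)+1:ℕ)*c)).card : ℝ)
        ≤ ∑ k ∈ Finset.range M, 2 * 2^n * (Real.exp (-1))^(k+1) := by
      apply Finset.sum_le_sum
      intro k _
      have heq : (Finset.univ.filter (fun x : Fin n → Bool => ff w x ≤ med - ((k+1:ℕ):ℝ)*c))
          = (Finset.univ.filter (fun x : Fin n → Bool => ff w x ≤ med - ((k:ℝ)+1)*c)) :=
        Finset.filter_congr (fun x _ => by norm_cast)
      rw [heq]
      exact hgk k
    have hsum3 : ∑ k ∈ Finset.range M, 2 * 2^n * (Real.exp (-1))^(k+1)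
        ≤ 2 * 2^n := by
      have h1 : ∑ k ∈ Finset.range M, 2 * 2^n * (Real.exp (-1))^(k+1)
          = 2 * 2^n * Real.exp (-1) * ∑ k ∈ Finset.range M, (Real.exp (-1))^k := by
        rw [Finset.mul_sum]
        apply Finset.sum_congr rfl
        intro k _
        rw [pow_succ]
        ring
      rw [h1]
      have h2 := geom_bound M
      have hrh : Real.exp (-1) ≤ 1/2 := by
        have he : (2:ℝ) ≤ Real.exp 1 := by
          have := Real.add_one_le_exp (1:ℝ)
          linarith
        rw [Real.exp_neg]
        have hmul : (Real.exp 1)⁻¹ * Real.exp 1 = 1 :=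
          inv_mul_cancel₀ (ne_of_gt (Real.exp_pos _))
        nlinarith [inv_nonneg.2 (Real.exp_pos 1).le]
      have h3 : 0 ≤ ∑ k ∈ Finset.range M, (Real.exp (-1))^k :=
        Finset.sum_nonneg fun k _ => pow_nonneg (Real.exp_pos _).le _
      have hES : Real.exp (-1) * (∑ k ∈ Finset.range M, (Real.exp (-1))^k) ≤ 1 := by
        nlinarith [(Real.exp_pos (-1)).le]
      calc 2 * (2:ℝ)^n * Real.exp (-1) * (∑ k ∈ Finset.range M, (Real.exp (-1))^k)
          = 2 * 2^n * (Real.exp (-1) * ∑ k ∈ Finset.range M, (Real.exp (-1))^k) := by ring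
      _ ≤ 2 * 2^n * 1 := mul_le_mul_of_nonneg_left hES (by positivity)
      _ = 2 * 2^n := mul_one _
    calc (∑ k ∈ Finset.range M,
          ((Finset.univ.filter
            (fun x : Fin n → Bool => ff w x ≤ med - ((k+1:ℕ):ℝ)*c)).card : ℝ))
          + ((Finset.univ.filter
            (fun x : Fin n → Bool => ff w x ≤ med - ((0:ℕ):ℝ)*c)).card : ℝ)
        ≤ 2*2^n + 2^n := by
          apply add_le_add _ hg0
          exact le_trans hsum2 hsum3
    _ ≤ 5 * 2^n := by nlinarith [pow_pos (show (0:ℝ) < 2 by norm_num) n]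
  calc (∑ x, (med - ff w x))
      ≤ ∑ x : Fin n → Bool, c * (((Finset.range N).filter
          (fun k : ℕ => ff w x ≤ med - (k:ℝ)*c)).card : ℝ) :=
        Finset.sum_le_sum fun x _ => hlayer x
  _ = c * ∑ x : Fin n → Bool, (((Finset.range N).filter
          (fun k : ℕ => ff w x ≤ med - (k:ℝ)*c)).card : ℝ) := by rw [Finset.mul_sum]
  _ = c * ∑ k ∈ Finset.range N, ((Finset.univ.filter
          (fun x : Fin n → Bool => ff w x ≤ med - (k:ℝ)*c)).card : ℝ) := by rw [hswap]
  _ ≤ c * (5 * 2^n) := mul_le_mul_of_nonneg_left hbound hcpos.le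
  _ = 5 * c * 2^n := by ring

lemma sqrt32_le (σ2 : ℝ) (h : 0 ≤ σ2) : Real.sqrt (32*σ2) ≤ 6 * Real.sqrt σ2 := by
  rw [Real.sqrt_mul (by norm_num : (0:ℝ) ≤ 32)]
  have h36 : Real.sqrt 36 = 6 := by
    rw [show (36:ℝ) = 6^2 by norm_num, Real.sqrt_sq (by norm_num)]
  have h32 : Real.sqrt 32 ≤ 6 := by
    rw [← h36]
    exact Real.sqrt_le_sqrt (by norm_num)
  exact mul_le_mul_of_nonneg_right h32 (Real.sqrt_nonneg _)

end Application
end Tal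

open Tal in
/-- Talagrand's concentration inequality (expectation form) for
`‖∑ ε_i w_i‖` over uniform signs, with `σ² = sup{∑ φ(w_i)² : ‖φ‖* ≤ 1}`. -/
theorem talagrand_concentration :
    ∃ C₁ > (0:ℝ), ∃ c₁ > (0:ℝ),
      ∀ (E : Type) (_ : NormedAddCommGroup E) (_ : NormedSpace ℝ E)
        (n : ℕ) (w : Fin n → E) (σ2 : ℝ),
      σ2 = sSup { s : ℝ | ∃ φ : E →L[ℝ] ℝ, ‖φ‖ ≤ 1 ∧ s = ∑ i, (φ (w i)) ^ 2 } →
      ∀ t > (0:ℝ),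
        ((Finset.univ.filter (fun ε : Fin n → Bool =>
            t ≤ |‖∑ i, (if ε i then (1:ℝ) else -1) • w i‖ -
              (∑ ε' : Fin n → Bool,
                ‖∑ i, (if ε' i then (1:ℝ) else -1) • w i‖) / 2 ^ n|)).card : ℝ)
            / 2 ^ n
          ≤ C₁ * Real.exp (-c₁ * t ^ 2 / σ2) := by
  refine ⟨Real.exp 29, Real.exp_pos _, 1/128, by norm_num, ?_⟩
  intro E _inst1 _inst2 n w σ2 hσ t ht
  have hσ' : σ2 = sSup (SS w) := hσ
  have hσ0 : 0 ≤ σ2 := sigma2_nonneg hσ'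
  have h2npos : (0:ℝ) < 2^n := by positivity
  have hffeq : ∀ ε : Fin n → Bool,
      ‖∑ i, (if ε i then (1:ℝ) else -1) • w i‖ = ff w ε := fun ε => rfl
  set μ : ℝ := (∑ ε' : Fin n → Bool,
      ‖∑ i, (if ε' i then (1:ℝ) else -1) • w i‖) / 2 ^ n with hμ
  have hμf : μ = (∑ ε' : Fin n → Bool, ff w ε') / 2^n := rfl
  have hμ2 : μ * 2^n = ∑ x : Fin n → Bool, ff w x := by
    rw [hμf]
    field_simp
  have hRHSpos : 0 < Real.exp 29 * Real.exp (-(1/128) * t ^ 2 / σ2) := by positivity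
  rcases lt_or_eq_of_le hσ0 with hσpos | hσz
  · -- main case σ2 > 0
    obtain ⟨med, hmed0, hmedU, hmedL⟩ := exists_median w
    have hsσ : 0 < Real.sqrt σ2 := Real.sqrt_pos.2 hσpos
    have hmm : |μ - med| ≤ 30 * Real.sqrt σ2 := by
      have hc6 := sqrt32_le σ2 hσ0
      have hUE := upper_expect hσ' hσpos hmedU
      have hLE := lower_expect hσ' hσpos hmed0 hmedL
      have hconstsum : ∑ _x : Fin n → Bool, med = 2^n * med := by
        rw [Finset.sum_const, card_univ_cube, nsmul_eq_mul]
        push_cast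
        ring
      have e1 : (μ - med) * 2^n = ∑ x : Fin n → Bool, (ff w x - med) := by
        rw [Finset.sum_sub_distrib, hconstsum, ← hμ2]
        ring
      have e2 : (med - μ) * 2^n = ∑ x : Fin n → Bool, (med - ff w x) := by
        rw [Finset.sum_sub_distrib, hconstsum, ← hμ2]
        ring
      have h1 : (μ - med) * 2^n ≤ 30 * Real.sqrt σ2 * 2^n := by
        rw [e1]
        calc ∑ x : Fin n → Bool, (ff w x - med) ≤ 2 * Real.sqrt (32*σ2) * 2^n := hUE
        _ ≤ 30 * Real.sqrt σ2 * 2^n := by nlinarith [Real.sqrt_nonneg (32*σ2)]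
      have h2 : (med - μ) * 2^n ≤ 30 * Real.sqrt σ2 * 2^n := by
        rw [e2]
        calc ∑ x : Fin n → Bool, (med - ff w x) ≤ 5 * Real.sqrt (32*σ2) * 2^n := hLE
        _ ≤ 30 * Real.sqrt σ2 * 2^n := by nlinarith [Real.sqrt_nonneg (32*σ2)]
      have h1' : μ - med ≤ 30 * Real.sqrt σ2 := le_of_mul_le_mul_right h1 h2npos
      have h2' : med - μ ≤ 30 * Real.sqrt σ2 := le_of_mul_le_mul_right h2 h2npos
      rw [abs_le]
      constructor <;> linarith
    by_cases htsmall : t ≤ 60 * Real.sqrt σ2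
    · -- small t : trivial bound by 1
      have hcard : ((Finset.univ.filter (fun ε : Fin n → Bool =>
          t ≤ |‖∑ i, (if ε i then (1:ℝ) else -1) • w i‖ - μ|)).card : ℝ) ≤ 2^n := by
        have h1 := Finset.card_filter_le (Finset.univ : Finset (Fin n → Bool))
          (fun ε : Fin n → Bool =>
            t ≤ |‖∑ i, (if ε i then (1:ℝ) else -1) • w i‖ - μ|)
        calc ((Finset.univ.filter _).card : ℝ) ≤ ((Finset.univ : Finset (Fin n → Bool)).card : ℝ) := by
              exact_mod_cast h1
        _ = 2^n := by rw [card_univ_cube]; push_cast; ring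
      have hexp : 1 ≤ Real.exp 29 * Real.exp (-(1/128) * t ^ 2 / σ2) := by
        rw [← Real.exp_add]
        apply Real.one_le_exp
        have ht2 : t^2 ≤ 3600 * σ2 := by
          have := Real.sq_sqrt hσ0
          nlinarith
        have : (1/128) * t^2 / σ2 ≤ 29 := by
          rw [div_le_iff₀ hσpos]
          nlinarith
        have harg : -(1/128) * t ^ 2 / σ2 = -((1/128) * t^2 / σ2) := by ring
        rw [harg]
        linarith
      rw [div_le_iff₀ h2npos]
      calc ((Finset.univ.filter _).card : ℝ) ≤ 2^n := hcard
      _ = 1 * 2^n := (one_mul _).symm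
      _ ≤ (Real.exp 29 * Real.exp (-(1/128) * t ^ 2 / σ2)) * 2^n := by
          apply mul_le_mul_of_nonneg_right hexp h2npos.le
    · -- large t
      push_neg at htsmall
      have ht2 : 0 < t/2 := by linarith
      have hUB := tail_upper hσ' hσpos hmedU ht2
      have hLB := tail_lower hσ' hσpos hmedL ht2
      have hsub : (Finset.univ.filter (fun ε : Fin n → Bool =>
            t ≤ |‖∑ i, (if ε i then (1:ℝ) else -1) • w i‖ - μ|))
          ⊆ (Finset.univ.filter (fun x => med + t/2 ≤ ff w x))
            ∪ (Finset.univ.filter (fun x => ff w x ≤ med - t/2)) := by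
        intro x hx
        have hx' := (Finset.mem_filter.1 hx).2
        rw [hffeq x] at hx'
        rw [Finset.mem_union]
        rcases le_abs.1 hx' with h | h
        · left
          refine Finset.mem_filter.2 ⟨Finset.mem_univ _, ?_⟩
          have habs := abs_le.1 hmm
          linarith [habs.1, habs.2]
        · right
          refine Finset.mem_filter.2 ⟨Finset.mem_univ _, ?_⟩
          have habs := abs_le.1 hmm
          linarith [habs.1, habs.2]
      have hcardle : ((Finset.univ.filter (fun ε : Fin n → Bool =>
            t ≤ |‖∑ i, (if ε i then (1:ℝ) else -1) • w i‖ - μ|)).card : ℝ)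
          ≤ ((Finset.univ.filter (fun x => med + t/2 ≤ ff w x)).card : ℝ)
            + ((Finset.univ.filter (fun x => ff w x ≤ med - t/2)).card : ℝ) := by
        have h1 := Finset.card_le_card hsub
        have h2 := Finset.card_union_le
          (Finset.univ.filter (fun x => med + t/2 ≤ ff w x))
          (Finset.univ.filter (fun x => ff w x ≤ med - t/2))
        exact_mod_cast le_trans h1 h2
      have hargeq : (t/2)^2 / (32*σ2) = (1/128) * t^2 / σ2 := by
        field_simp
        ring
      have hargeq2 : -(1/128) * t ^ 2 / σ2 = -((t/2)^2 / (32*σ2)) := by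
        rw [hargeq]
        ring
      have hfour : ((Finset.univ.filter (fun ε : Fin n → Bool =>
            t ≤ |‖∑ i, (if ε i then (1:ℝ) else -1) • w i‖ - μ|)).card : ℝ)
          ≤ 4 * 2^n * Real.exp (-(1/128) * t ^ 2 / σ2) := by
        calc ((Finset.univ.filter _).card : ℝ)
            ≤ ((Finset.univ.filter (fun x => med + t/2 ≤ ff w x)).card : ℝ)
              + ((Finset.univ.filter (fun x => ff w x ≤ med - t/2)).card : ℝ) := hcardle
        _ ≤ 2 * (2:ℝ)^n / Real.exp ((t/2)^2 / (32*σ2))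
              + 2 * (2:ℝ)^n / Real.exp ((t/2)^2 / (32*σ2)) := add_le_add hUB hLB
        _ = 4 * 2^n * (Real.exp ((t/2)^2 / (32*σ2)))⁻¹ := by
            rw [div_eq_mul_inv]
            ring
        _ = 4 * 2^n * Real.exp (-(1/128) * t ^ 2 / σ2) := by
            rw [hargeq2, Real.exp_neg]
      rw [div_le_iff₀ h2npos]
      have h29 : (4:ℝ) ≤ Real.exp 29 := by
        have := Real.add_one_le_exp (29:ℝ)
        linarith
      have hstep : (4:ℝ) * 2^n * Real.exp (-(1/128) * t ^ 2 / σ2)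
          ≤ Real.exp 29 * Real.exp (-(1/128) * t ^ 2 / σ2) * 2^n := by
        have hh := mul_le_mul_of_nonneg_right
          (mul_le_mul_of_nonneg_right h29 (Real.exp_pos (-(1/128) * t ^ 2 / σ2)).le) h2npos.le
        calc (4:ℝ) * 2^n * Real.exp (-(1/128) * t ^ 2 / σ2)
            = 4 * Real.exp (-(1/128) * t ^ 2 / σ2) * 2^n := by ring
        _ ≤ Real.exp 29 * Real.exp (-(1/128) * t ^ 2 / σ2) * 2^n := hh
      exact le_trans hfour hstep
  · -- σ2 = 0 : f is constant
    have hσz' : σ2 = 0 := hσz.symm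
    have hle : ∀ x y : Fin n → Bool, ff w x ≤ ff w y := by
      intro x y
      have h := lip_bound hσ' (fun i => sg x i - sg y i)
      rw [hσz', zero_mul] at h
      have hz : ‖∑ i, (sg x i - sg y i) • w i‖ = 0 := by
        nlinarith [norm_nonneg (∑ i, (sg x i - sg y i) • w i)]
      have hsplit : ∑ i, sg x i • w i
          = (∑ i, sg y i • w i) + ∑ i, (sg x i - sg y i) • w i := by
        rw [← Finset.sum_add_distrib]
        apply Finset.sum_congr rfl
        intro i _
        rw [← add_smul]
        ring_nf
      calc ff w x = ‖∑ i, sg x i • w i‖ := rfl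
      _ = ‖(∑ i, sg y i • w i) + ∑ i, (sg x i - sg y i) • w i‖ := by rw [hsplit]
      _ ≤ ‖∑ i, sg y i • w i‖ + ‖∑ i, (sg x i - sg y i) • w i‖ := norm_add_le _ _
      _ = ff w y := by rw [hz]; simp [ff]
    have hconst : ∀ x y : Fin n → Bool, ff w x = ff w y :=
      fun x y => le_antisymm (hle x y) (hle y x)
    have hempty : (Finset.univ.filter (fun ε : Fin n → Bool =>
        t ≤ |‖∑ i, (if ε i then (1:ℝ) else -1) • w i‖ - μ|)) = ∅ := by
      apply Finset.filter_false_of_mem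
      intro x _
      rw [hffeq x]
      have hμx : μ = ff w x := by
        rw [hμf]
        have : ∑ ε' : Fin n → Bool, ff w ε' = ∑ _ε' : Fin n → Bool, ff w x :=
          Finset.sum_congr rfl fun ε' _ => hconst ε' x
        rw [this, Finset.sum_const, card_univ_cube, nsmul_eq_mul]
        push_cast
        field_simp
      rw [hμx, sub_self, abs_zero]
      linarith
    rw [hempty]
    simp only [Finset.card_empty, Nat.cast_zero, zero_div]
    positivity
end
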